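/- arXiv:0907.3695 — 5 statements merged into one kernel-verified Lean document; each statement's English description precedes it below -/
import Mathlib

section
/- Let m : (0,∞) → ℝ be continuous and right-differentiable at every point, and suppose that for all t > 0, m'_r(t) + (max{m(t), 0})² ≤ 0, where m'_r denotes the right derivative. Then m(t) ≤ 1/t for all t > 0. -/
open Set Filter

/-- If `m : (0,∞) → ℝ` is continuous, right-differentiable at every
point `t > 0` with right derivative `m' t`, and `m' t + (max (m t) 0)^2 ≤ 0` for all `t > 0`,
then `m t ≤ 1/t` for all `t > 0`. -/
theorem ode_comparison_right_derivative
    (m m' : ℝ → ℝ)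
    (hcont : ContinuousOn m (Set.Ioi (0 : ℝ)))
    (hderiv : ∀ t > (0 : ℝ), HasDerivWithinAt m (m' t) (Set.Ioi t) t)
    (hineq : ∀ t > (0 : ℝ), m' t + (max (m t) 0) ^ 2 ≤ 0) :
    ∀ t > (0 : ℝ), m t ≤ 1 / t := by
  intro t ht
  by_contra hlt
  push_neg at hlt
  set c := m t with hc
  have hct : 1 / t < c := hlt
  have hc0 : 0 < c := lt_trans (by positivity) hct
  -- 1/c < t
  have h1c : 1 / c < t := by
    rw [div_lt_iff₀ hc0]
    rw [div_lt_iff₀ ht] at hct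
    linarith [hct]
  set b := (t - 1 / c) / 2 with hb
  have hb0 : 0 < b := by
    have : 0 < t - 1 / c := by linarith
    positivity
  have hbt : b < t := by
    have h1 : 0 < 1 / c := by positivity
    rw [hb]; linarith
  have htb : 1 / c < t - b := by rw [hb]; linarith
  -- bound m on [b, t]
  obtain ⟨C, hC⟩ := (isCompact_Icc (a := b) (b := t)).exists_bound_of_continuousOn
    (hcont.mono (fun x hx => lt_of_lt_of_le hb0 hx.1))
  have hC0 : 0 ≤ C := le_trans (norm_nonneg _) (hC t ⟨le_of_lt hbt, le_refl t⟩)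
  set a := b + min ((t - b) / 2) (1 / (C + 1)) with ha
  have hmin0 : 0 < min ((t - b) / 2) (1 / (C + 1)) := by
    apply lt_min
    · linarith
    · positivity
  have hba : b < a := by rw [ha]; linarith
  have hat : a < t := by
    have h1 : min ((t - b) / 2) (1 / (C + 1)) ≤ (t - b) / 2 := min_le_left _ _
    rw [ha]; linarith
  have ha0 : 0 < a := lt_trans hb0 hba
  have hab : a - b ≤ 1 / (C + 1) := by
    rw [ha]; simpa using min_le_right ((t - b) / 2) (1 / (C + 1))
  have hma : m a ≤ (a - b)⁻¹ := by
    have h1 : m a ≤ C := le_trans (le_abs_self _) (hC a ⟨le_of_lt hba, le_of_lt hat⟩)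
    have h2 : C + 1 ≤ (a - b)⁻¹ := by
      rw [le_inv_comm₀ (by positivity) (by linarith)]
      simpa [one_div] using hab
    linarith
  -- for every ε > 0, compare with B x = (x-b)⁻¹ + ε (x - a) on [a, t]
  have key : ∀ ε > (0 : ℝ), m t ≤ (t - b)⁻¹ + ε * (t - a) := by
    intro ε hε
    have hIcc : Icc a t ⊆ Ioi (0 : ℝ) := fun x hx => lt_of_lt_of_le ha0 hx.1
    have hBd : ∀ x, HasDerivAt (fun x => (x - b)⁻¹ + ε * (x - a))
        (-((x - b)⁻¹) ^ 2 + ε) x ∨ x ∈ ({b} : Set ℝ) := by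
      intro x
      by_cases hx : x = b
      · right; simp [hx]
      · left
        have hxb : x - b ≠ 0 := sub_ne_zero.2 hx
        have h1 : HasDerivAt (fun x : ℝ => x - b) 1 x := by
          simpa using (hasDerivAt_id x).sub_const b
        have h2 : HasDerivAt (fun x : ℝ => (x - b)⁻¹) (-1 / (x - b) ^ 2) x := h1.inv hxb
        have h3 : HasDerivAt (fun x : ℝ => ε * (x - a)) ε x := by
          simpa using (((hasDerivAt_id x).sub_const a).const_mul ε)
        have := h2.add h3
        rw [show -((x - b)⁻¹) ^ 2 + ε = -1 / (x - b) ^ 2 + ε by rw [neg_div, one_div, inv_pow]]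
        exact this
    have hB' : ∀ x ∈ Ico a t, HasDerivWithinAt (fun x => (x - b)⁻¹ + ε * (x - a))
        (-((x - b)⁻¹) ^ 2 + ε) (Ici x) x := by
      intro x hx
      rcases hBd x with h | h
      · exact h.hasDerivWithinAt
      · rw [Set.mem_singleton_iff] at h
        exact absurd h (by intro he; rw [he] at hx; linarith [hx.1])
    have hBc : ContinuousOn (fun x => (x - b)⁻¹ + ε * (x - a)) (Icc a t) := by
      intro x hx
      rcases hBd x with h | h
      · exact h.continuousAt.continuousWithinAt
      · rw [Set.mem_singleton_iff] at h
        exact absurd h (by intro he; rw [he] at hx; linarith [hx.1])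
    have comp : ∀ ⦃x⦄, x ∈ Icc a t → m x ≤ (x - b)⁻¹ + ε * (x - a) := by
      refine image_le_of_deriv_right_lt_deriv_boundary' (f' := m')
        (hcont.mono hIcc) ?_ (by simpa using hma) hBc hB' ?_
      · intro x hx
        exact ((hderiv x (lt_of_lt_of_le ha0 hx.1)).Ici_of_Ioi)
      · intro x hx heq
        have hx0 : 0 < x := lt_of_lt_of_le ha0 hx.1
        have hxb : 0 < x - b := by linarith [hx.1, hba]
        have hinv : 0 < (x - b)⁻¹ := by positivity
        have hεx : 0 ≤ ε * (x - a) := by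
          have := hx.1; nlinarith
        have hmx : (x - b)⁻¹ ≤ m x := by rw [heq]; exact le_add_of_nonneg_right hεx
        have hmx0 : 0 < m x := lt_of_lt_of_le hinv hmx
        have hmax : max (m x) 0 = m x := max_eq_left hmx0.le
        have h1 := hineq x hx0
        rw [hmax] at h1
        have h2 : ((x - b)⁻¹) ^ 2 ≤ (m x) ^ 2 := by nlinarith
        nlinarith
    exact comp ⟨le_of_lt hat, le_refl t⟩
  -- let ε → 0
  have hfin : m t ≤ (t - b)⁻¹ := by
    refine le_of_forall_pos_le_add ?_
    intro δ hδ
    have hta : 0 < t - a := by linarith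
    have := key (δ / (t - a)) (by positivity)
    rw [div_mul_cancel₀ _ (ne_of_gt hta)] at this
    linarith
  -- contradiction: (t - b)⁻¹ < c = m t
  have : (t - b)⁻¹ < c := by
    rw [inv_lt_comm₀ (by linarith) hc0]
    simpa [one_div] using htb
  linarith
end

section
/- Let λ ∈ (0,1) and let v : ℝ → ℝ be odd, bounded and continuous on ℝ \ {0}, and C¹ on ℝ \ {0}, with v not identically zero. Suppose x* > 0 satisfies v(x*) = max_{x>0} v(x) and v(x*) ≥ 0. Then the fractional Laplacian L_λ[v](x*) := -G_λ ∫_ℝ (v(x*+z) - v(x*))/|z|^{1+λ} dz is strictly positive, where G_λ > 0 is the Lévy-Khintchine normalization constant. -/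
open MeasureTheory Set Filter Topology

private lemma my_integrableOn_neg {f : ℝ → ℝ} {s : Set ℝ}
    (h : IntegrableOn (fun x => f (-x)) ((fun x : ℝ => -x) ⁻¹' s) volume) :
    IntegrableOn f s volume := by
  have m : MeasurableEmbedding (fun x : ℝ => -x) := (Homeomorph.neg ℝ).measurableEmbedding
  have h2 := (m.integrableOn_map_iff (f := f) (s := s)).mpr h
  rwa [Measure.map_neg_eq_self] at h2

private lemma my_asm {f : ℝ → ℝ} {a : ℝ} (hf : ContinuousOn f {a}ᶜ) :
    AEStronglyMeasurable f (volume : Measure ℝ) := by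
  have h1 : ({a}ᶜ : Set ℝ) =ᵐ[volume] (univ : Set ℝ) := by
    rw [ae_eq_univ, compl_compl]
    exact measure_singleton a
  have h2 := hf.aestronglyMeasurable (μ := volume) (measurableSet_singleton a).compl
  rwa [Measure.restrict_congr_set h1, Measure.restrict_univ] at h2

/-- positive reverse maximum principle for odd functions.
Let `λ ∈ (0,1)` and let `v : ℝ → ℝ` be odd, bounded and continuous on `ℝ \ {0}`,
`C¹` on `ℝ \ {0}` and not identically zero.  If `x* > 0` satisfies
`v x* = max_{x > 0} v x` and `v x* ≥ 0`, then the fractional Laplacian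
`L_λ[v](x*) = -G_λ ∫ (v (x*+z) - v x*)/|z|^{1+λ} dz` is strictly positive, where
`G_λ = λ Γ((1+λ)/2) / (2 π^{1/2+λ} Γ(1-λ/2)) > 0`. -/
theorem reverse_maximum_principle_odd
    (l : ℝ) (hl : l ∈ Set.Ioo (0 : ℝ) 1)
    (G : ℝ) (hG : G = l * Real.Gamma ((1 + l) / 2) /
      (2 * Real.pi ^ ((1 : ℝ) / 2 + l) * Real.Gamma (1 - l / 2)))
    (v : ℝ → ℝ)
    (hodd : ∀ x : ℝ, v (-x) = -v x)
    (hbdd : ∃ M : ℝ, ∀ x : ℝ, x ≠ 0 → |v x| ≤ M)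
    (hcont : ContinuousOn v {(0 : ℝ)}ᶜ)
    (hC1 : ContDiffOn ℝ 1 v {(0 : ℝ)}ᶜ)
    (hne : v ≠ 0)
    (xs : ℝ) (hxs : 0 < xs)
    (hmax : ∀ x : ℝ, 0 < x → v x ≤ v xs)
    (hnonneg : 0 ≤ v xs) :
    0 < -G * ∫ z : ℝ, (v (xs + z) - v xs) / |z| ^ (1 + l) := by
  obtain ⟨hl0, hl1⟩ := hl
  -- positivity of the constant
  have hG0 : 0 < G := by
    rw [hG]
    apply div_pos
    · exact mul_pos hl0 (Real.Gamma_pos_of_pos (by linarith))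
    · exact mul_pos (mul_pos two_pos (Real.rpow_pos_of_pos Real.pi_pos _))
        (Real.Gamma_pos_of_pos (by linarith))
  set f : ℝ → ℝ := fun z => (v (xs + z) - v xs) / |z| ^ (1 + l) with hfdef
  -- basics
  have hvzero : v 0 = 0 := by have h := hodd 0; rw [neg_zero] at h; linarith
  obtain ⟨M, hM⟩ := hbdd
  set C : ℝ := max M 0 with hCdef
  have hC0 : 0 ≤ C := le_max_right _ _
  have hvb : ∀ x : ℝ, |v x| ≤ C := by
    intro x
    rcases eq_or_ne x 0 with h | h
    · rw [h, hvzero, abs_zero]; exact hC0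
    · exact (hM x h).trans (le_max_left _ _)
  -- measurability
  have hker : Continuous fun z : ℝ => |z| ^ (1 + l) :=
    continuous_abs.rpow_const fun x => Or.inr (by linarith)
  have hfm : AEStronglyMeasurable f (volume : Measure ℝ) := by
    have h1 : ContinuousOn (fun z => v (xs + z)) ({-xs}ᶜ) := by
      apply hcont.comp (continuous_add_left xs).continuousOn
      intro z hz h0
      have h0' : xs + z = 0 := h0
      exact hz (mem_singleton_iff.mpr (by linarith))
    exact (((my_asm h1).sub aestronglyMeasurable_const).aemeasurable.div
      hker.aestronglyMeasurable.aemeasurable).aestronglyMeasurable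
  -- Lipschitz bound near xs
  have hxsmem : xs ∈ ({(0 : ℝ)}ᶜ : Set ℝ) := by simp [ne_of_gt hxs]
  have hcd : ContDiffAt ℝ 1 v xs := hC1.contDiffAt (isOpen_compl_singleton.mem_nhds hxsmem)
  obtain ⟨K, t, ht, hK⟩ := hcd.exists_lipschitzOnWith
  obtain ⟨δ, hδ0, hball⟩ := Metric.mem_nhds_iff.mp ht
  have hlip : ∀ z : ℝ, |z| < δ → |v (xs + z) - v xs| ≤ K * |z| := by
    intro z hz
    have h1 : xs + z ∈ t := hball (by
      simp only [Metric.mem_ball, Real.dist_eq, add_sub_cancel_left]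
      exact hz)
    have h2 : xs ∈ t := hball (Metric.mem_ball_self hδ0)
    have h3 := hK.dist_le_mul (xs + z) h1 xs h2
    rw [Real.dist_eq, Real.dist_eq, add_sub_cancel_left] at h3
    exact h3
  set δ' : ℝ := δ / 2 with hδ'def
  have hδ'0 : 0 < δ' := by positivity
  -- global pointwise bound
  have hnum : ∀ z : ℝ, |v (xs + z) - v xs| ≤ 2 * C := by
    intro z
    calc |v (xs + z) - v xs| ≤ |v (xs + z)| + |v xs| := abs_sub _ _
    _ ≤ C + C := add_le_add (hvb _) (hvb _)
    _ = 2 * C := by ring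
  -- integrability on the right tail
  have hIoi : IntegrableOn f (Ioi δ') volume := by
    apply Integrable.mono' (g := fun z : ℝ => (2 * C) * z ^ (-(1 + l)))
      (((integrableOn_Ioi_rpow_of_lt (by linarith) hδ'0)).const_mul _) hfm.restrict
    filter_upwards [ae_restrict_mem measurableSet_Ioi] with z hz
    have hz0 : 0 < z := hδ'0.trans hz
    have hzp : (0 : ℝ) < z ^ (1 + l) := Real.rpow_pos_of_pos hz0 _
    rw [Real.norm_eq_abs, hfdef]
    simp only
    rw [abs_div, abs_of_nonneg (Real.rpow_nonneg (abs_nonneg z) _), abs_of_pos hz0,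
      Real.rpow_neg hz0.le, ← div_eq_mul_inv]
    gcongr
    exact hnum z
  -- integrability on the left tail
  have hIic : IntegrableOn f (Iic (-δ')) volume := by
    apply my_integrableOn_neg
    have hpre : ((fun x : ℝ => -x) ⁻¹' Iic (-δ')) = Ici δ' := by
      ext x
      simp only [mem_preimage, mem_Iic, mem_Ici, neg_le_neg_iff]
    rw [hpre, integrableOn_Ici_iff_integrableOn_Ioi]
    have hfmneg : AEStronglyMeasurable (fun z => f (-z)) (volume : Measure ℝ) := by
      have h1 : AEStronglyMeasurable f (Measure.map (fun x : ℝ => -x) volume) := by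
        rwa [Measure.map_neg_eq_self]
      exact h1.comp_measurable measurable_neg
    apply Integrable.mono' (g := fun z : ℝ => (2 * C) * z ^ (-(1 + l)))
      (((integrableOn_Ioi_rpow_of_lt (by linarith) hδ'0)).const_mul _) hfmneg.restrict
    filter_upwards [ae_restrict_mem measurableSet_Ioi] with z hz
    have hz0 : 0 < z := hδ'0.trans hz
    rw [Real.norm_eq_abs, hfdef]
    simp only
    rw [abs_div, abs_of_nonneg (Real.rpow_nonneg (abs_nonneg (-z)) _), abs_neg, abs_of_pos hz0,
      Real.rpow_neg hz0.le, ← div_eq_mul_inv]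
    gcongr
    exact hnum (-z)
  -- integrability in the middle
  have hmid : IntegrableOn f (Ioc (-δ') δ') volume := by
    have base : IntegrableOn (fun z : ℝ => |z| ^ (-l)) (Ioo 0 δ') volume := by
      apply IntegrableOn.congr_fun
        ((intervalIntegral.integrableOn_Ioo_rpow_iff hδ'0).mpr (by linarith : (-1 : ℝ) < -l))
        ?_ measurableSet_Ioo
      intro x hx
      simp only [abs_of_pos hx.1]
    have bIco : IntegrableOn (fun z : ℝ => |z| ^ (-l)) (Ico 0 δ') volume := by
      rw [IntegrableOn, ← Measure.restrict_congr_set Ioo_ae_eq_Ico]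
      exact base
    have bIoc : IntegrableOn (fun z : ℝ => |z| ^ (-l)) (Ioc 0 δ') volume := by
      rw [IntegrableOn, ← Measure.restrict_congr_set Ioo_ae_eq_Ioc]
      exact base
    have bneg : IntegrableOn (fun z : ℝ => |z| ^ (-l)) (Ioc (-δ') 0) volume := by
      apply my_integrableOn_neg
      have hpre : ((fun x : ℝ => -x) ⁻¹' Ioc (-δ') 0) = Ico 0 δ' := by
        ext x
        simp only [mem_preimage, mem_Ioc, mem_Ico]
        constructor
        · rintro ⟨h1, h2⟩; exact ⟨by linarith, by linarith⟩
        · rintro ⟨h1, h2⟩; exact ⟨by linarith, by linarith⟩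
      rw [hpre]
      simpa [abs_neg] using bIco
    have bmidb : IntegrableOn (fun z : ℝ => (K : ℝ) * |z| ^ (-l)) (Ioc (-δ') δ') volume := by
      have h1 := bneg.union bIoc
      rw [Ioc_union_Ioc_eq_Ioc (by linarith) hδ'0.le] at h1
      exact h1.const_mul _
    apply Integrable.mono' bmidb hfm.restrict
    have hne0 : ∀ᵐ z : ℝ, z ≠ (0 : ℝ) := by
      refine ae_iff.mpr ?_
      simpa using measure_singleton (0 : ℝ)
    filter_upwards [ae_restrict_mem measurableSet_Ioc,
      hne0.filter_mono (ae_mono Measure.restrict_le_self)] with z hz hz0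
    have habs : 0 < |z| := abs_pos.mpr hz0
    have habsδ : |z| < δ := by
      have : |z| ≤ δ' := abs_le.mpr ⟨hz.1.le, hz.2⟩
      rw [hδ'def] at this
      linarith
    have hlz := hlip z habsδ
    rw [Real.norm_eq_abs, hfdef]
    simp only
    rw [abs_div, abs_of_nonneg (Real.rpow_nonneg (abs_nonneg z) _)]
    have hden : |z| ^ (1 + l) = |z| * |z| ^ l := by
      rw [Real.rpow_add habs, Real.rpow_one]
    rw [hden, Real.rpow_neg (abs_nonneg z), div_le_iff₀ (by positivity)]
    have hrw : (K : ℝ) * (|z| ^ l)⁻¹ * (|z| * |z| ^ l) = K * |z| := by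
      have : |z| ^ l ≠ 0 := by positivity
      field_simp
    rw [hrw]
    exact hlz
  -- full integrability
  have hIf : Integrable f (volume : Measure ℝ) := by
    rw [← integrableOn_univ]
    have hcover : (univ : Set ℝ) = Iic (-δ') ∪ (Ioc (-δ') δ' ∪ Ioi δ') := by
      rw [Ioc_union_Ioi_eq_Ioi (by linarith : -δ' ≤ δ'), Iic_union_Ioi]
    rw [hcover]
    exact hIic.union (hmid.union hIoi)
  -- translate: g y = f (y - xs)
  set g : ℝ → ℝ := fun y => (v y - v xs) / |y - xs| ^ (1 + l) with hgdef
  have hgeq : g = fun y => f (y - xs) := by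
    funext y
    rw [hgdef, hfdef]
    simp only [add_sub_cancel]
  have hIg : Integrable g (volume : Measure ℝ) := by
    rw [hgeq]; exact hIf.comp_sub_right xs
  have hIgneg : Integrable (fun y => g (-y)) (volume : Measure ℝ) := hIg.comp_neg
  set w : ℝ → ℝ := fun y => g (-y) + g y with hwdef
  have hint_eq : ∫ z, f z = ∫ y in Ioi (0 : ℝ), w y := by
    calc ∫ z, f z = ∫ y, g y := by
          rw [hgeq]; exact (integral_sub_right_eq_self f xs).symm
    _ = (∫ y in Iic (0 : ℝ), g y) + ∫ y in Ioi (0 : ℝ), g y := by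
          rw [← setIntegral_union (Iic_disjoint_Ioi le_rfl) measurableSet_Ioi
            hIg.integrableOn hIg.integrableOn, Iic_union_Ioi, setIntegral_univ]
    _ = (∫ y in Ioi (0 : ℝ), g (-y)) + ∫ y in Ioi (0 : ℝ), g y := by
          rw [integral_comp_neg_Ioi, neg_zero]
    _ = ∫ y in Ioi (0 : ℝ), w y := (integral_add hIgneg.integrableOn hIg.integrableOn).symm
  have hInt_w : IntegrableOn w (Ioi (0 : ℝ)) volume :=
    hIgneg.integrableOn.add hIg.integrableOn
  -- formula for w on the positive half line
  have hw_formula : ∀ y : ℝ, 0 < y →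
      w y = (-(v y) - v xs) / (y + xs) ^ (1 + l) + (v y - v xs) / |y - xs| ^ (1 + l) := by
    intro y hy
    rw [hwdef, hgdef]
    simp only
    rw [hodd y]
    have habs : |(-y) - xs| = y + xs := by
      rw [show (-y - xs : ℝ) = -(y + xs) by ring, abs_neg, abs_of_pos (by linarith)]
    rw [habs]
  -- the key inequalities
  have hkey : ∀ y : ℝ, 0 < y → y ≠ xs →
      w y ≤ -(2 * v xs) / (y + xs) ^ (1 + l) ∧
      (v y < v xs → w y < -(2 * v xs) / (y + xs) ^ (1 + l)) := by
    intro y hy hyx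
    have hb0 : (0 : ℝ) < (y + xs) ^ (1 + l) := Real.rpow_pos_of_pos (by linarith) _
    have ha0 : (0 : ℝ) < |y - xs| ^ (1 + l) :=
      Real.rpow_pos_of_pos (abs_pos.mpr (sub_ne_zero.mpr hyx)) _
    have hab : |y - xs| ^ (1 + l) < (y + xs) ^ (1 + l) := by
      apply Real.rpow_lt_rpow (abs_nonneg _) ?_ (by linarith)
      exact abs_lt.mpr ⟨by linarith, by linarith⟩
    have hsum : (v y - v xs) / (y + xs) ^ (1 + l) + (-(v y) - v xs) / (y + xs) ^ (1 + l)
        = -(2 * v xs) / (y + xs) ^ (1 + l) := by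
      rw [← add_div]
      ring_nf
    have hw := hw_formula y hy
    constructor
    · have hmono : (v y - v xs) / |y - xs| ^ (1 + l) ≤ (v y - v xs) / (y + xs) ^ (1 + l) := by
        rw [div_eq_mul_inv, div_eq_mul_inv]
        exact mul_le_mul_of_nonpos_left (inv_anti₀ ha0 hab.le)
          (by linarith [hmax y hy])
      rw [hw]
      calc (-(v y) - v xs) / (y + xs) ^ (1 + l) + (v y - v xs) / |y - xs| ^ (1 + l)
          ≤ (-(v y) - v xs) / (y + xs) ^ (1 + l) + (v y - v xs) / (y + xs) ^ (1 + l) :=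
            add_le_add_right hmono _
      _ = -(2 * v xs) / (y + xs) ^ (1 + l) := by rw [add_comm]; exact hsum
    · intro hlt
      have hmono : (v y - v xs) / |y - xs| ^ (1 + l) < (v y - v xs) / (y + xs) ^ (1 + l) := by
        rw [div_eq_mul_inv, div_eq_mul_inv]
        exact mul_lt_mul_of_neg_left (inv_strictAnti₀ ha0 hab) (by linarith)
      rw [hw]
      calc (-(v y) - v xs) / (y + xs) ^ (1 + l) + (v y - v xs) / |y - xs| ^ (1 + l)
          < (-(v y) - v xs) / (y + xs) ^ (1 + l) + (v y - v xs) / (y + xs) ^ (1 + l) :=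
            add_lt_add_right hmono _
      _ = -(2 * v xs) / (y + xs) ^ (1 + l) := by rw [add_comm]; exact hsum
  have hbnd_nonpos : ∀ y : ℝ, 0 < y → -(2 * v xs) / (y + xs) ^ (1 + l) ≤ 0 :=
    fun y hy => div_nonpos_iff.mpr (Or.inr ⟨by linarith, (Real.rpow_pos_of_pos (by linarith) _).le⟩)
  -- an open set on which w is strictly negative
  obtain ⟨U, hUopen, hUne, hUsub, hUneg⟩ : ∃ U : Set ℝ,
      IsOpen U ∧ U.Nonempty ∧ U ⊆ Ioi (0 : ℝ) ∧ ∀ y ∈ U, w y < 0 := by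
    rcases eq_or_lt_of_le hnonneg with hv0 | hvpos
    · -- the case v xs = 0
      obtain ⟨x0, hx0⟩ : ∃ x, v x ≠ 0 := by
        by_contra hcon
        push_neg at hcon
        exact hne (funext hcon)
      obtain ⟨y0, hy0, hvy0⟩ : ∃ y0 : ℝ, 0 < y0 ∧ v y0 ≠ 0 := by
        rcases lt_trichotomy x0 0 with h | h | h
        · refine ⟨-x0, by linarith, ?_⟩
          rw [hodd]
          simpa using hx0
        · rw [h, hvzero] at hx0
          exact absurd rfl hx0
        · exact ⟨x0, h, hx0⟩
      have hvy0neg : v y0 < 0 := by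
        have := hmax y0 hy0
        rcases lt_or_eq_of_le this with h | h
        · linarith [hv0]
        · exact absurd (h.trans hv0.symm) hvy0
      have hy0xs : y0 ≠ xs := by
        intro hcon
        rw [hcon] at hvy0neg
        linarith
      -- continuity of w at y0
      have hcv : ContinuousAt v y0 :=
        hcont.continuousAt (isOpen_compl_singleton.mem_nhds (by simp [ne_of_gt hy0]))
      have hcvneg : ContinuousAt (fun y : ℝ => v (-y)) y0 := by
        have h1 : ContinuousAt v (-y0) :=
          hcont.continuousAt (isOpen_compl_singleton.mem_nhds
            (by simp [ne_of_lt (neg_neg_iff_pos.mpr hy0)]))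
        exact h1.comp continuous_neg.continuousAt
      have hker1 : Continuous (fun y : ℝ => |y - xs| ^ (1 + l)) :=
        (continuous_abs.comp (continuous_id.sub continuous_const)).rpow_const
          fun x => Or.inr (by linarith)
      have hker2 : Continuous (fun y : ℝ => |(-y) - xs| ^ (1 + l)) :=
        (continuous_abs.comp ((continuous_neg).sub continuous_const)).rpow_const
          fun x => Or.inr (by linarith)
      have hcw : ContinuousAt w y0 := by
        have e1 : (fun y => g (-y)) = fun y => (v (-y) - v xs) / |(-y) - xs| ^ (1 + l) := by
          funext y; rw [hgdef]
        have e2 : g = fun y => (v y - v xs) / |y - xs| ^ (1 + l) := hgdef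
        rw [hwdef]
        apply ContinuousAt.add
        · rw [e1]
          apply ContinuousAt.div (hcvneg.sub continuousAt_const) hker2.continuousAt
          have : |(-y0) - xs| = y0 + xs := by
            rw [show (-y0 - xs : ℝ) = -(y0 + xs) by ring, abs_neg, abs_of_pos (by linarith)]
          rw [this]
          exact ne_of_gt (Real.rpow_pos_of_pos (by linarith) _)
        · rw [e2]
          apply ContinuousAt.div (hcv.sub continuousAt_const) hker1.continuousAt
          exact ne_of_gt
            (Real.rpow_pos_of_pos (abs_pos.mpr (sub_ne_zero.mpr hy0xs)) _)
      have hwy0 : w y0 < 0 := by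
        have hk := (hkey y0 hy0 hy0xs).2 (by rw [← hv0]; exact hvy0neg)
        have hz : -(2 * v xs) / (y0 + xs) ^ (1 + l) = 0 := by
          rw [← hv0]
          simp
        exact lt_of_lt_of_eq hk hz
      have hev : ∀ᶠ y in 𝓝 y0, w y < 0 := hcw.eventually_lt_const hwy0
      obtain ⟨ε, hε0, hεsub⟩ := Metric.eventually_nhds_iff.mp hev
      set r : ℝ := min (ε / 2) (y0 / 2) with hrdef
      have hr0 : 0 < r := lt_min (by linarith) (by linarith)
      refine ⟨Ioo (y0 - r) (y0 + r), isOpen_Ioo, ⟨y0, by constructor <;> linarith⟩, ?_, ?_⟩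
      · intro y hy
        have hr2 : r ≤ y0 / 2 := min_le_right _ _
        have := hy.1
        simp only [mem_Ioi]
        linarith
      · intro y hy
        apply hεsub
        rw [Real.dist_eq, abs_lt]
        have hr1 : r ≤ ε / 2 := min_le_left _ _
        exact ⟨by linarith [hy.1], by linarith [hy.2]⟩
    · -- the case 0 < v xs
      refine ⟨Ioo 0 xs, isOpen_Ioo, nonempty_Ioo.mpr hxs, fun y hy => hy.1, ?_⟩
      intro y hy
      have hk := (hkey y hy.1 (ne_of_lt hy.2)).1
      have hneg : -(2 * v xs) / (y + xs) ^ (1 + l) < 0 :=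
        div_neg_of_neg_of_pos (by linarith)
          (Real.rpow_pos_of_pos (by linarith [hy.1]) _)
      exact hk.trans_lt hneg
  -- conclusion: the half-line integral is strictly negative
  have hne_xs : ∀ᵐ y : ℝ, y ≠ xs := by
    refine ae_iff.mpr ?_
    simpa using measure_singleton xs
  have hIioi : ∫ y in Ioi (0 : ℝ), w y < 0 := by
    have hsplit : Ioi (0 : ℝ) = U ∪ (Ioi 0 \ U) := (union_diff_cancel hUsub).symm
    have hmU : MeasurableSet U := hUopen.measurableSet
    have hi1 : IntegrableOn w U volume := hInt_w.mono_set hUsub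
    have hi2 : IntegrableOn w (Ioi 0 \ U) volume := hInt_w.mono_set diff_subset
    rw [hsplit, setIntegral_union disjoint_sdiff_self_right (measurableSet_Ioi.diff hmU) hi1 hi2]
    have h1 : ∫ y in U, w y < 0 := by
      have hi1n : Integrable (fun y : ℝ => -w y) (volume.restrict U) := hi1.neg
      have hnn : 0 ≤ᵐ[volume.restrict U] fun y : ℝ => -w y := by
        filter_upwards [ae_restrict_mem hmU] with y hy
        exact neg_nonneg.mpr (hUneg y hy).le
      have hpos : 0 < ∫ y in U, -w y := by
        refine (setIntegral_pos_iff_support_of_nonneg_ae hnn hi1n).mpr ?_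
        apply lt_of_lt_of_le (hUopen.measure_pos volume hUne)
        apply measure_mono
        intro y hy
        exact ⟨ne_of_gt (neg_pos.mpr (hUneg y hy)), hy⟩
      rw [integral_neg] at hpos
      linarith
    have h2 : ∫ y in Ioi 0 \ U, w y ≤ 0 := by
      apply integral_nonpos_of_ae
      filter_upwards [ae_restrict_mem (measurableSet_Ioi.diff hmU),
        hne_xs.filter_mono (ae_mono Measure.restrict_le_self)] with y hy hyx
      have hy0 : (0 : ℝ) < y := hy.1
      have hk := (hkey y hy0 hyx).1
      exact hk.trans (hbnd_nonpos y hy0)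
    linarith
  have hflt : ∫ z, f z < 0 := by rw [hint_eq]; exact hIioi
  exact mul_pos_of_neg_of_neg (neg_lt_zero.mpr hG0) hflt
end

section
/- Let λ ∈ (0,1) and let v ∈ H¹(ℝ \ {0}) (i.e. v ∈ L²(ℝ) with v restricted to each half-line in H¹). Then for all R > r > 0, ‖L_λ[v]‖_{L²(ℝ \ [-R,R])} ≤ (2G_λ r^{1-λ}/(1-λ)) ‖∂_x v‖_{L²(ℝ \ [-R+r, R-r])} + (4G_λ/(λ r^λ)) ‖v‖_{L²(ℝ)}. -/
open MeasureTheory Set Function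
open scoped ENNReal NNReal Interval

lemma iSup_min_natCast (a : ℝ≥0∞) : ⨆ m : ℕ, min a m = a := by
  refine le_antisymm (iSup_le fun m => min_le_left _ _) ?_
  rcases eq_or_ne a ∞ with h | h
  · subst h
    simp only [top_le_iff]
    rw [eq_top_iff]
    refine le_of_forall_lt fun c hc => ?_
    obtain ⟨m, hm⟩ := ENNReal.exists_nat_gt hc.ne_top
    refine lt_of_lt_of_le hm (le_trans (le_of_eq ?_) (le_iSup (fun m : ℕ => min ⊤ (m : ℝ≥0∞)) m))
    simp
  · obtain ⟨m, hm⟩ := ENNReal.exists_nat_gt h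
    exact le_trans (le_of_eq (min_eq_left hm.le).symm)
      (le_iSup (fun m : ℕ => min a (m : ℝ≥0∞)) m)

lemma rpow_half_le_of_le_mul {A B : ℝ≥0∞} (hA : A ≠ ∞) (h : A ≤ B * A ^ (1/2 : ℝ)) :
    A ^ (1/2 : ℝ) ≤ B := by
  rcases eq_or_ne A 0 with h0 | h0
  · simp [h0, ENNReal.zero_rpow_of_pos]
  · have hAh : A ^ (1/2 : ℝ) * A ^ (1/2 : ℝ) = A := by
      rw [← ENNReal.rpow_add _ _ h0 hA]; norm_num
    have h2 : A ^ (1/2 : ℝ) * A ^ (1/2 : ℝ) ≤ B * A ^ (1/2 : ℝ) := hAh.symm ▸ h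
    have hne : A ^ (1/2 : ℝ) ≠ 0 := by
      simp [ENNReal.rpow_eq_zero_iff, h0]
    have hnt : A ^ (1/2 : ℝ) ≠ ∞ := by
      simp [ENNReal.rpow_eq_top_iff, h0, hA]
    exact (ENNReal.mul_le_mul_iff_left hne hnt).mp h2

lemma iSup_rpow_two {a : ℕ → ℝ≥0∞} (ha : Monotone a) :
    (⨆ n, a n) ^ (2:ℝ) = ⨆ n, a n ^ (2:ℝ) := by
  refine le_antisymm ?_ (iSup_le fun n => ENNReal.rpow_le_rpow (le_iSup a n) (by norm_num))
  have h2 : ∀ b : ℝ≥0∞, b ^ (2:ℝ) = b * b := fun b => by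
    rw [show (2:ℝ) = ((2:ℕ):ℝ) by norm_num, ENNReal.rpow_natCast, sq]
  rw [h2]
  calc (⨆ n, a n) * (⨆ n, a n) = ⨆ n, a n * ⨆ m, a m := by rw [ENNReal.iSup_mul]
    _ = ⨆ n, ⨆ m, a n * a m := by simp_rw [ENNReal.mul_iSup]
    _ ≤ ⨆ k, a k ^ (2:ℝ) := by
        refine iSup_le fun n => iSup_le fun m => le_iSup_of_le (max n m) ?_
        rw [h2]
        exact mul_le_mul' (ha (le_max_left n m)) (ha (le_max_right n m))

theorem lintegral_minkowski_two {μ ν : Measure ℝ} [SigmaFinite μ] [SigmaFinite ν]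
    {f : ℝ → ℝ → ℝ≥0∞} (hf : Measurable (Function.uncurry f)) :
    (∫⁻ x, (∫⁻ z, f z x ∂ν) ^ (2:ℝ) ∂μ) ^ (1/2 : ℝ) ≤
      ∫⁻ z, (∫⁻ x, f z x ^ (2:ℝ) ∂μ) ^ (1/2 : ℝ) ∂ν := by
  set B := ∫⁻ z, (∫⁻ x, f z x ^ (2:ℝ) ∂μ) ^ (1/2 : ℝ) ∂ν with hB
  set g : ℝ → ℝ≥0∞ := fun x => ∫⁻ z, f z x ∂ν with hg
  have hfz : ∀ x, Measurable fun z => f z x := fun x =>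
    hf.comp (measurable_id.prodMk measurable_const)
  have hgm : Measurable g := Measurable.lintegral_prod_left hf
  set s : ℕ → Set ℝ := spanningSets μ with hs
  set h : ℕ → ℝ → ℝ≥0∞ := fun n x => (s n).indicator (fun x => min (g x) n) x with hh
  have hhm : ∀ n, Measurable (h n) := fun n =>
    (hgm.min measurable_const).indicator (measurableSet_spanningSets μ n)
  have hhg : ∀ n x, h n x ≤ g x := by
    intro n x
    by_cases hx : x ∈ s n <;> simp [hh, hx, min_le_left]
  have hmono : Monotone h := by
    intro n m hnm x
    by_cases hx : x ∈ s n
    · have hx' : x ∈ s m := monotone_spanningSets μ hnm hx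
      simp only [hh, indicator_of_mem hx, indicator_of_mem hx']
      exact min_le_min le_rfl (by exact_mod_cast Nat.cast_le.mpr hnm)
    · simp [hh, indicator_of_notMem hx]
  set A : ℕ → ℝ≥0∞ := fun n => ∫⁻ x, h n x ^ (2:ℝ) ∂μ with hA
  have hAfin : ∀ n, A n ≠ ∞ := by
    intro n
    have : A n ≤ (n : ℝ≥0∞) ^ (2:ℝ) * μ (s n) := by
      rw [hA, ← lintegral_indicator_const (measurableSet_spanningSets μ n)]
      refine lintegral_mono fun x => ?_
      by_cases hx : x ∈ s n
      · simp only [hh, indicator_of_mem hx, indicator_of_mem (show x ∈ spanningSets μ n from hx)]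
        exact ENNReal.rpow_le_rpow (min_le_right _ _) (by norm_num : (0:ℝ) ≤ 2)
      · simp [hh, indicator_of_notMem hx, ENNReal.zero_rpow_of_pos]
    refine ne_top_of_le_ne_top ?_ this
    exact ENNReal.mul_ne_top (ENNReal.rpow_ne_top_of_nonneg (by norm_num) (by simp))
      (measure_spanningSets_lt_top μ n).ne
  have h2 : ∀ b : ℝ≥0∞, b ^ (2:ℝ) = b * b := fun b => by
    rw [show (2:ℝ) = ((2:ℕ):ℝ) by norm_num, ENNReal.rpow_natCast, sq]
  have key : ∀ n, A n ≤ B * A n ^ (1/2 : ℝ) := by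
    intro n
    have step1 : A n ≤ ∫⁻ x, g x * h n x ∂μ := by
      rw [hA]
      refine lintegral_mono fun x => ?_
      rw [h2]
      exact mul_le_mul' (hhg n x) le_rfl
    have step2 : ∫⁻ x, g x * h n x ∂μ = ∫⁻ x, ∫⁻ z, f z x * h n x ∂ν ∂μ := by
      refine lintegral_congr fun x => ?_
      rw [hg, lintegral_mul_const _ (hfz x)]
    have step3 : ∫⁻ x, ∫⁻ z, f z x * h n x ∂ν ∂μ = ∫⁻ z, ∫⁻ x, f z x * h n x ∂μ ∂ν := by
      rw [← lintegral_lintegral_swap]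
      exact (Measurable.aemeasurable (by exact hf.mul ((hhm n).comp measurable_snd)))
    have step4 : ∫⁻ z, ∫⁻ x, f z x * h n x ∂μ ∂ν ≤
        ∫⁻ z, (∫⁻ x, f z x ^ (2:ℝ) ∂μ) ^ (1/2:ℝ) * A n ^ (1/2:ℝ) ∂ν := by
      refine lintegral_mono fun z => ?_
      exact ENNReal.lintegral_mul_le_Lp_mul_Lq μ Real.HolderConjugate.two_two
        (hf.comp (measurable_const.prodMk measurable_id)).aemeasurable
        ((hhm n).aemeasurable)
    have step5 : ∫⁻ z, (∫⁻ x, f z x ^ (2:ℝ) ∂μ) ^ (1/2:ℝ) * A n ^ (1/2:ℝ) ∂ν =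
        B * A n ^ (1/2:ℝ) := by
      rw [hB, lintegral_mul_const]
      exact Measurable.pow_const
        (Measurable.lintegral_prod_right (f := fun z x => f z x ^ (2:ℝ))
          (by exact hf.pow_const 2)) _
    exact le_trans step1 (le_trans (le_of_eq step2)
      (le_trans (le_of_eq step3) (le_trans step4 (le_of_eq step5))))
  have hAB : ∀ n, A n ≤ B ^ (2:ℝ) := by
    intro n
    have h1 : A n ^ (1/2:ℝ) ≤ B := rpow_half_le_of_le_mul (hAfin n) (key n)
    calc A n = (A n ^ (1/2:ℝ)) ^ (2:ℝ) := by
          rw [← ENNReal.rpow_mul]; norm_num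
      _ ≤ B ^ (2:ℝ) := ENNReal.rpow_le_rpow h1 (by norm_num)
  have hsup : ∫⁻ x, g x ^ (2:ℝ) ∂μ = ⨆ n, A n := by
    have hxsup : ∀ x, ⨆ n, h n x = g x := by
      intro x
      refine le_antisymm (iSup_le fun n => hhg n x) ?_
      have hxmem : ∃ n₀, x ∈ s n₀ := by
        have : x ∈ ⋃ n, s n := by rw [hs, iUnion_spanningSets]; trivial
        exact mem_iUnion.mp this
      obtain ⟨n₀, hn₀⟩ := hxmem
      conv_lhs => rw [← iSup_min_natCast (g x)]
      refine iSup_le fun m => ?_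
      have hx' : x ∈ s (max m n₀) := monotone_spanningSets μ (le_max_right m n₀) hn₀
      refine le_trans ?_ (le_iSup (fun n => h n x) (max m n₀))
      simp only [hh, indicator_of_mem hx']
      exact min_le_min le_rfl (by exact_mod_cast Nat.cast_le.mpr (le_max_left m n₀))
    have : ∀ x, g x ^ (2:ℝ) = ⨆ n, h n x ^ (2:ℝ) := fun x => by
      rw [← hxsup x, iSup_rpow_two (fun n m hnm => hmono hnm x)]
    rw [lintegral_congr this, lintegral_iSup (fun n => (hhm n).pow_const _)
      (fun n m hnm x => ENNReal.rpow_le_rpow (hmono hnm x) (by norm_num))]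
  rw [hsup]
  calc (⨆ n, A n) ^ (1/2:ℝ) ≤ (B ^ (2:ℝ)) ^ (1/2:ℝ) :=
        ENNReal.rpow_le_rpow (iSup_le hAB) (by norm_num)
    _ = B := by rw [← ENNReal.rpow_mul]; norm_num

lemma lintegral_translate (u : ℝ → ℝ≥0∞) (c : ℝ) : ∫⁻ x, u (x + c) = ∫⁻ x, u x :=
  (measurePreserving_add_right volume c).lintegral_comp_emb
    (MeasurableEquiv.addRight c).measurableEmbedding u

lemma lintegral_neg' (u : ℝ → ℝ≥0∞) : ∫⁻ x : ℝ, u (-x) = ∫⁻ x, u x :=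
  (Measure.measurePreserving_neg volume).lintegral_comp_emb
    (MeasurableEquiv.neg ℝ).measurableEmbedding u

lemma setLIntegral_translate_le (u : ℝ → ℝ≥0∞) {A A' : Set ℝ} (hA : MeasurableSet A)
    (hA' : MeasurableSet A') (c : ℝ) (h : ∀ x ∈ A, x + c ∈ A') :
    ∫⁻ x in A, u (x + c) ≤ ∫⁻ x in A', u x := by
  rw [← lintegral_indicator hA, ← lintegral_indicator hA']
  calc ∫⁻ x, A.indicator (fun x => u (x + c)) x
      ≤ ∫⁻ x, (A'.indicator u) (x + c) := by
        refine lintegral_mono fun x => ?_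
        by_cases hx : x ∈ A
        · rw [indicator_of_mem hx, indicator_of_mem (h x hx)]
        · simp [indicator_of_notMem hx]
    _ = ∫⁻ y, A'.indicator u y := lintegral_translate _ c

lemma setLIntegral_translate_eq (u : ℝ → ℝ≥0∞) {S T : Set ℝ} (hT : MeasurableSet T)
    (c : ℝ) (h : ∀ x, x ∈ T ↔ x + c ∈ S) :
    ∫⁻ x in T, u (x + c) = ∫⁻ s in S, u s := by
  have hS : MeasurableSet S := by
    have : S = (fun y : ℝ => y + -c) ⁻¹' T := by
      ext y; simp [h (y + -c)]
    rw [this]; exact hT.preimage (measurable_add_const _)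
  rw [← lintegral_indicator hT, ← lintegral_indicator hS]
  have hpt : ∀ x, T.indicator (fun x => u (x + c)) x = (S.indicator u) (x + c) := by
    intro x
    by_cases hx : x ∈ T
    · rw [indicator_of_mem hx, indicator_of_mem ((h x).mp hx)]
    · rw [indicator_of_notMem hx, indicator_of_notMem (fun hc => hx ((h x).mpr hc))]
  rw [lintegral_congr hpt]
  exact lintegral_translate _ c

lemma setLIntegral_neg_eq (u : ℝ → ℝ≥0∞) {S T : Set ℝ} (hS : MeasurableSet S)
    (h : ∀ z, z ∈ T ↔ -z ∈ S) :
    ∫⁻ z in T, u (-z) = ∫⁻ z in S, u z := by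
  have hT : MeasurableSet T := by
    have : T = (fun y : ℝ => -y) ⁻¹' S := by ext y; simp [h y]
    rw [this]; exact hS.preimage measurable_neg
  rw [← lintegral_indicator hT, ← lintegral_indicator hS]
  have hpt : ∀ x, T.indicator (fun z => u (-z)) x = (S.indicator u) (-x) := by
    intro x
    by_cases hx : x ∈ T
    · rw [indicator_of_mem hx, indicator_of_mem ((h x).mp hx)]
    · rw [indicator_of_notMem hx, indicator_of_notMem (fun hc => hx ((h x).mpr hc))]
  rw [lintegral_congr hpt]
  exact lintegral_neg' _

lemma sqrt_integral_sq_eq (u : ℝ → ℝ) (μ : Measure ℝ) (hu : AEStronglyMeasurable u μ) :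
    Real.sqrt (∫ x, u x ^ 2 ∂μ) =
      ((∫⁻ x, ((‖u x‖₊ : ℝ≥0∞)) ^ (2:ℝ) ∂μ) ^ (1/2:ℝ)).toReal := by
  have h1 : ∫ x, u x ^ 2 ∂μ = (∫⁻ x, ENNReal.ofReal (u x ^ 2) ∂μ).toReal :=
    integral_eq_lintegral_of_nonneg_ae (Filter.Eventually.of_forall fun x => sq_nonneg _)
      ((hu.mul hu).congr (Filter.Eventually.of_forall fun x => (pow_two (u x)).symm))
  have h2 : ∀ x, ENNReal.ofReal (u x ^ 2) = ((‖u x‖₊ : ℝ≥0∞)) ^ (2:ℝ) := by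
    intro x
    rw [← enorm_eq_nnnorm, Real.enorm_eq_ofReal_abs, show ((2:ℝ)) = ((2:ℕ):ℝ) by norm_num,
      ENNReal.rpow_natCast, ← sq_abs (u x)]
    exact ENNReal.ofReal_pow (abs_nonneg _) 2
  simp_rw [h1, h2]
  rw [Real.sqrt_eq_rpow, ENNReal.toReal_rpow]

lemma ftc_sq_bound {v v' : ℝ → ℝ} (hderiv : ∀ x : ℝ, x ≠ 0 → HasDerivAt v (v' x) x)
    (hv'2 : MemLp v' 2 (volume : Measure ℝ)) (x z : ℝ)
    (hseg : ∀ y ∈ uIcc x (x + z), y ≠ 0) :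
    ((‖v (x + z) - v x‖₊ : ℝ≥0∞)) ^ (2:ℝ) ≤
      ENNReal.ofReal |z| * ∫⁻ s in Ι x (x + z), ((‖v' s‖₊ : ℝ≥0∞)) ^ (2:ℝ) := by
  have hint : IntervalIntegrable v' volume x (x + z) :=
    ((hv'2.locallyIntegrable one_le_two).integrableOn_isCompact isCompact_uIcc).intervalIntegrable
  have heq : ∫ y in x..(x+z), v' y = v (x+z) - v x :=
    intervalIntegral.integral_eq_sub_of_hasDerivAt (fun y hy => hderiv y (hseg y hy)) hint
  set B := ∫⁻ s in Ι x (x+z), ((‖v' s‖₊ : ℝ≥0∞)) ^ (2:ℝ) with hBdef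
  set V := ENNReal.ofReal |z| with hVdef
  have h1 : (‖v (x+z) - v x‖₊ : ℝ≥0∞) ≤ ∫⁻ s in Ι x (x+z), (‖v' s‖₊ : ℝ≥0∞) := by
    rw [← heq]
    rcases le_total x (x+z) with hc | hc
    · rw [intervalIntegral.integral_of_le hc, uIoc_of_le hc]
      exact enorm_integral_le_lintegral_enorm _
    · rw [intervalIntegral.integral_of_ge hc, uIoc_comm, uIoc_of_le hc, nnnorm_neg]
      exact enorm_integral_le_lintegral_enorm _
  have hvol : volume (Ι x (x+z)) = V := by
    rw [uIoc, Real.volume_Ioc, max_sub_min_eq_abs, add_sub_cancel_left]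
  have h2 : ∫⁻ s in Ι x (x+z), (‖v' s‖₊ : ℝ≥0∞) ≤ B ^ (1/2:ℝ) * V ^ (1/2:ℝ) := by
    have hH := ENNReal.lintegral_mul_le_Lp_mul_Lq (volume.restrict (Ι x (x+z)))
      Real.HolderConjugate.two_two
      (hv'2.1.restrict.enorm) (aemeasurable_const (b := (1:ℝ≥0∞)))
    simp only [Pi.mul_apply, mul_one, ENNReal.one_rpow, lintegral_one,
      Measure.restrict_apply MeasurableSet.univ, univ_inter] at hH
    rw [hvol] at hH
    exact hH
  calc (‖v (x+z) - v x‖₊ : ℝ≥0∞) ^ (2:ℝ)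
      ≤ (B ^ (1/2:ℝ) * V ^ (1/2:ℝ)) ^ (2:ℝ) :=
        ENNReal.rpow_le_rpow (h1.trans h2) (by norm_num)
    _ = B * V := by
        rw [ENNReal.mul_rpow_of_nonneg _ _ (by norm_num), ← ENNReal.rpow_mul,
          ← ENNReal.rpow_mul, show (1/2:ℝ)*2 = 1 by norm_num, ENNReal.rpow_one,
          ENNReal.rpow_one]
    _ = V * B := mul_comm _ _

lemma const_small {l r : ℝ} (hl0 : 0 < l) (hl1 : l < 1) (hr : 0 < r) :
    ∫⁻ z in {z : ℝ | |z| ≤ r}, ENNReal.ofReal (|z| ^ (-l)) ≤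
      ENNReal.ofReal (2 * r ^ (1 - l) / (1 - l)) := by
  have hpos : ∫⁻ z in Ioc (0:ℝ) r, ENNReal.ofReal (|z| ^ (-l)) =
      ENNReal.ofReal (r ^ (1-l) / (1-l)) := by
    have hcong : ∫⁻ z in Ioc (0:ℝ) r, ENNReal.ofReal (|z| ^ (-l)) =
        ∫⁻ z in Ioc (0:ℝ) r, ENNReal.ofReal (z ^ (-l)) := by
      refine setLIntegral_congr_fun measurableSet_Ioc
        (fun z hz => ?_)
      rw [abs_of_pos hz.1]
    have hii : IntervalIntegrable (fun z : ℝ => z ^ (-l)) volume 0 r :=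
      intervalIntegral.intervalIntegrable_rpow' (by linarith)
    have hint : IntegrableOn (fun z : ℝ => z ^ (-l)) (Ioc 0 r) volume := by
      rw [← intervalIntegrable_iff_integrableOn_Ioc_of_le hr.le]; exact hii
    have hval : ∫ z in Ioc (0:ℝ) r, z ^ (-l) = r ^ (1-l) / (1-l) := by
      rw [← intervalIntegral.integral_of_le hr.le,
        integral_rpow (Or.inl (by linarith)), Real.zero_rpow (by linarith : -l + 1 ≠ 0),
        show -l + 1 = 1 - l by ring, sub_zero]
    rw [hcong, ← ofReal_integral_eq_lintegral_ofReal hint ?_, hval]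
    · filter_upwards [ae_restrict_mem measurableSet_Ioc] with z hz
      exact Real.rpow_nonneg hz.1.le _
  have hneg : ∫⁻ z in Ioc (-r) (0:ℝ), ENNReal.ofReal (|z| ^ (-l)) =
      ENNReal.ofReal (r ^ (1-l) / (1-l)) := by
    have h1 : ∫⁻ z in Ico (0:ℝ) r, ENNReal.ofReal (|(-z)| ^ (-l)) =
        ∫⁻ z in Ioc (-r) (0:ℝ), ENNReal.ofReal (|z| ^ (-l)) := by
      refine setLIntegral_neg_eq (fun z => ENNReal.ofReal (|z| ^ (-l)))
        measurableSet_Ioc fun z => ?_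
      simp only [mem_Ico, mem_Ioc]
      constructor
      · rintro ⟨h1, h2⟩; constructor <;> linarith
      · rintro ⟨h1, h2⟩; constructor <;> linarith
    have h2 : ∫⁻ z in Ico (0:ℝ) r, ENNReal.ofReal (|(-z)| ^ (-l)) =
        ∫⁻ z in Ioc (0:ℝ) r, ENNReal.ofReal (|z| ^ (-l)) := by
      simp_rw [abs_neg]
      exact setLIntegral_congr Ico_ae_eq_Ioc
    rw [← h1, h2, hpos]
  have hsplit : {z : ℝ | |z| ≤ r} = Ioc (-r) 0 ∪ Ioc 0 r ∪ {-r} := by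
    ext z
    simp only [mem_setOf_eq, abs_le, mem_union, mem_Ioc, mem_singleton_iff]
    constructor
    · rintro ⟨h1, h2⟩
      rcases eq_or_lt_of_le h1 with h | h
      · exact Or.inr h.symm
      · rcases le_or_gt z 0 with h' | h'
        · exact Or.inl (Or.inl ⟨h, h'⟩)
        · exact Or.inl (Or.inr ⟨h', h2⟩)
    · rintro ((⟨h1, h2⟩ | ⟨h1, h2⟩) | h)
      · exact ⟨h1.le, by linarith⟩
      · exact ⟨by linarith, h2⟩
      · rw [h]; exact ⟨le_rfl, by linarith⟩
  calc ∫⁻ z in {z : ℝ | |z| ≤ r}, ENNReal.ofReal (|z| ^ (-l))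
      ≤ (∫⁻ z in Ioc (-r) 0 ∪ Ioc 0 r, ENNReal.ofReal (|z| ^ (-l))) +
          ∫⁻ z in {(-r:ℝ)}, ENNReal.ofReal (|z| ^ (-l)) := by
        rw [hsplit]
        exact lintegral_union_le _ _ _
    _ ≤ ENNReal.ofReal (r ^ (1-l) / (1-l)) + ENNReal.ofReal (r ^ (1-l) / (1-l)) + 0 := by
        gcongr
        · refine le_trans (lintegral_union_le _ _ _) ?_
          rw [hneg, hpos]
        · rw [Measure.restrict_singleton]
          simp
    _ = ENNReal.ofReal (2 * r ^ (1-l) / (1-l)) := by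
        have hnn : 0 ≤ r ^ (1-l) / (1-l) :=
          div_nonneg (Real.rpow_nonneg hr.le _) (by linarith)
        rw [add_zero, ← ENNReal.ofReal_add hnn hnn]
        congr 1
        ring

lemma const_large {l r : ℝ} (hl0 : 0 < l) (hr : 0 < r) :
    ∫⁻ z in {z : ℝ | r < |z|}, ENNReal.ofReal (|z| ^ (-1 - l)) ≤
      ENNReal.ofReal (2 * r ^ (-l) / l) := by
  have hpos : ∫⁻ z in Ioi r, ENNReal.ofReal (|z| ^ (-1 - l)) =
      ENNReal.ofReal (r ^ (-l) / l) := by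
    have hcong : ∫⁻ z in Ioi r, ENNReal.ofReal (|z| ^ (-1 - l)) =
        ∫⁻ z in Ioi r, ENNReal.ofReal (z ^ (-1 - l)) := by
      refine setLIntegral_congr_fun measurableSet_Ioi
        (fun z hz => ?_)
      rw [abs_of_pos (hr.trans hz)]
    have hint : IntegrableOn (fun z : ℝ => z ^ (-1 - l)) (Ioi r) volume :=
      integrableOn_Ioi_rpow_of_lt (by linarith) hr
    have hval : ∫ z in Ioi r, z ^ (-1 - l) = r ^ (-l) / l := by
      rw [integral_Ioi_rpow_of_lt (by linarith) hr, show (-1 - l) + 1 = -l by ring]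
      rw [div_neg, neg_div, neg_neg]
    rw [hcong, ← ofReal_integral_eq_lintegral_ofReal hint ?_, hval]
    · filter_upwards [ae_restrict_mem measurableSet_Ioi] with z hz
      exact Real.rpow_nonneg (hr.trans hz).le _
  have hneg : ∫⁻ z in Iio (-r), ENNReal.ofReal (|z| ^ (-1 - l)) =
      ENNReal.ofReal (r ^ (-l) / l) := by
    have h1 : ∫⁻ z in Ioi r, ENNReal.ofReal (|(-z)| ^ (-1 - l)) =
        ∫⁻ z in Iio (-r), ENNReal.ofReal (|z| ^ (-1 - l)) := by
      refine setLIntegral_neg_eq (fun z => ENNReal.ofReal (|z| ^ (-1 - l)))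
        measurableSet_Iio fun z => ?_
      simp only [mem_Ioi, mem_Iio]
      constructor <;> intro h <;> linarith
    rw [← h1, ← hpos]
    refine lintegral_congr fun z => ?_
    rw [abs_neg]
  have hsplit : {z : ℝ | r < |z|} = Iio (-r) ∪ Ioi r := by
    ext z
    simp only [mem_setOf_eq, mem_union, mem_Iio, mem_Ioi]
    rcases le_or_gt 0 z with h | h
    · rw [abs_of_nonneg h]
      constructor
      · exact fun hh => Or.inr hh
      · rintro (hh | hh) <;> linarith
    · rw [abs_of_neg h]
      constructor
      · intro hh; exact Or.inl (by linarith)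
      · rintro (hh | hh) <;> linarith
  rw [hsplit]
  refine le_trans (lintegral_union_le _ _ _) ?_
  rw [hneg, hpos, ← ENNReal.ofReal_add, ← two_mul, mul_div_assoc]
  · exact div_nonneg (Real.rpow_nonneg hr.le _) hl0.le
  · exact div_nonneg (Real.rpow_nonneg hr.le _) hl0.le

lemma ae_translate {P : ℝ → Prop} (h : ∀ᵐ y : ℝ, P y) (x : ℝ) : ∀ᵐ z : ℝ, P (x + z) := by
  rw [ae_iff] at h ⊢
  have heq : {z : ℝ | ¬ P (x + z)} = (fun z : ℝ => x + z) ⁻¹' {y | ¬ P y} := rfl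
  rw [heq]
  exact (measurePreserving_add_left volume x).quasiMeasurePreserving.preimage_null h

lemma ae_ne_zero : ∀ᵐ z : ℝ, z ≠ 0 := by
  rw [ae_iff]
  simp only [ne_eq, not_not]
  have : {z : ℝ | z = 0} = {(0:ℝ)} := by ext z; simp
  rw [this]
  exact Real.volume_singleton

lemma sq_rpow_half (a : ℝ≥0∞) : (a * a) ^ (1/2:ℝ) = a := by
  have h2 : a * a = a ^ (2:ℝ) := by
    rw [show (2:ℝ) = ((2:ℕ):ℝ) by norm_num, ENNReal.rpow_natCast, sq]
  rw [h2, ← ENNReal.rpow_mul, show (2:ℝ) * (1/2) = 1 by norm_num, ENNReal.rpow_one]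

lemma lintegral_sq_lt_top {v : ℝ → ℝ} (hv : MemLp v 2 (volume : Measure ℝ)) :
    ∫⁻ x, (‖v x‖₊ : ℝ≥0∞) ^ (2:ℝ) < ∞ := by
  have h := hv.2
  rw [eLpNorm_eq_lintegral_rpow_enorm_toReal (by norm_num) (by norm_num),
    ENNReal.toReal_ofNat] at h
  rw [← ENNReal.rpow_lt_top_iff_of_pos (show (0:ℝ) < 1/2 by norm_num)]
  exact h

/-- L² estimate away from the origin for the fractional Laplacian
of an `H¹(ℝ \ {0})` function.  Let `λ ∈ (0,1)` and `v ∈ H¹(ℝ \ {0})`, i.e. `v ∈ L²(ℝ)`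
is differentiable off the origin with derivative `v' ∈ L²(ℝ)`.  Then for all `R > r > 0`,
`‖L_λ[v]‖_{L²(ℝ\[-R,R])} ≤ (2 G_λ r^{1-λ}/(1-λ)) ‖v'‖_{L²(ℝ\[-R+r,R-r])}
  + (4 G_λ/(λ r^λ)) ‖v‖_{L²(ℝ)}`. -/
theorem fractional_laplacian_L2_tail_estimate
    (l : ℝ) (hl : l ∈ Set.Ioo (0 : ℝ) 1)
    (G : ℝ) (hG : G = l * Real.Gamma ((1 + l) / 2) /
      (2 * Real.pi ^ ((1 : ℝ) / 2 + l) * Real.Gamma (1 - l / 2)))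
    (v v' : ℝ → ℝ)
    (hv2 : MemLp v 2 (volume : Measure ℝ))
    (hderiv : ∀ x : ℝ, x ≠ 0 → HasDerivAt v (v' x) x)
    (hv'2 : MemLp v' 2 (volume : Measure ℝ))
    (R r : ℝ) (hr : 0 < r) (hRr : r < R) :
    MemLp (fun x : ℝ => -G * ∫ z : ℝ, (v (x + z) - v x) / |z| ^ (1 + l)) 2
        ((volume : Measure ℝ).restrict {x : ℝ | R < |x|}) ∧
    Real.sqrt (∫ x in {x : ℝ | R < |x|},
        (-G * ∫ z : ℝ, (v (x + z) - v x) / |z| ^ (1 + l)) ^ 2) ≤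
      2 * G * r ^ (1 - l) / (1 - l) *
          Real.sqrt (∫ x in {x : ℝ | R - r < |x|}, (v' x) ^ 2) +
        4 * G / (l * r ^ l) * Real.sqrt (∫ x : ℝ, (v x) ^ 2) := by
  obtain ⟨hl0, hl1⟩ := hl
  have hG0 : 0 < G := by
    rw [hG]
    have h1 : 0 < Real.Gamma ((1 + l) / 2) := Real.Gamma_pos_of_pos (by linarith)
    have h2 : 0 < Real.Gamma (1 - l / 2) := Real.Gamma_pos_of_pos (by linarith)
    have h3 : 0 < Real.pi ^ ((1:ℝ)/2 + l) := Real.rpow_pos_of_pos Real.pi_pos _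
    positivity
  -- measurable representatives
  set w : ℝ → ℝ := hv2.1.mk v with hwdef
  have hwm : Measurable w := hv2.1.stronglyMeasurable_mk.measurable
  have hvw : v =ᵐ[volume] w := hv2.1.ae_eq_mk
  set w' : ℝ → ℝ := hv'2.1.mk v' with hw'def
  have hw'm : Measurable w' := hv'2.1.stronglyMeasurable_mk.measurable
  have hvw' : v' =ᵐ[volume] w' := hv'2.1.ae_eq_mk
  -- sets and measures
  set A : Set ℝ := {x : ℝ | R < |x|} with hAdef
  set A' : Set ℝ := {x : ℝ | R - r < |x|} with hA'def
  have hAm : MeasurableSet A := measurableSet_lt measurable_const measurable_abs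
  have hA'm : MeasurableSet A' := measurableSet_lt measurable_const measurable_abs
  set μ : Measure ℝ := volume.restrict A with hμdef
  set μ' : Measure ℝ := volume.restrict A' with hμ'def
  -- kernel with measurable representative
  set d : ℝ → ℝ≥0∞ := fun z => ENNReal.ofReal (|z| ^ (1 + l)) with hddef
  have habs_rpow_cont : Continuous fun z : ℝ => |z| ^ (1 + l) :=
    continuous_abs.rpow_const fun x => Or.inr (by linarith)
  have hdm : Measurable d := habs_rpow_cont.measurable.ennreal_ofReal
  have hd_pos : ∀ z : ℝ, z ≠ 0 → d z ≠ 0 := by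
    intro z hz
    simp only [hddef, ne_eq, ENNReal.ofReal_eq_zero, not_le]
    exact Real.rpow_pos_of_pos (abs_pos.mpr hz) _
  have hd_ne_top : ∀ z : ℝ, d z ≠ ∞ := fun z => ENNReal.ofReal_ne_top
  set K : ℝ → ℝ → ℝ≥0∞ := fun z x => (‖w (x + z) - w x‖₊ : ℝ≥0∞) / d z with hKdef
  have hKm : Measurable (Function.uncurry K) := by
    have h1 : Measurable fun p : ℝ × ℝ => w (p.2 + p.1) :=
      hwm.comp (measurable_snd.add measurable_fst)
    have h2 : Measurable fun p : ℝ × ℝ => w p.2 := hwm.comp measurable_snd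
    exact ((h1.sub h2).enorm).div (hdm.comp measurable_fst)
  -- the target function and its measurable version
  set f : ℝ → ℝ := fun x : ℝ => -G * ∫ z : ℝ, (v (x + z) - v x) / |z| ^ (1 + l) with hfdef
  set fw : ℝ → ℝ := fun x : ℝ => -G * ∫ z : ℝ, (w (x + z) - w x) / |z| ^ (1 + l) with hfwdef
  have hfwm : StronglyMeasurable fw := by
    have hj : StronglyMeasurable fun p : ℝ × ℝ => (w (p.1 + p.2) - w p.1) / |p.2| ^ (1 + l) := by
      refine Measurable.stronglyMeasurable ?_
      exact ((hwm.comp (measurable_fst.add measurable_snd)).sub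
        (hwm.comp measurable_fst)).div (habs_rpow_cont.measurable.comp measurable_snd)
    exact (hj.integral_prod_right').const_mul (-G)
  have hffw : f =ᵐ[volume] fw := by
    filter_upwards [hvw] with x hx
    simp only [hfdef, hfwdef]
    congr 1
    refine integral_congr_ae ?_
    filter_upwards [ae_translate hvw x] with z hz
    rw [hz, hx]
  -- pointwise ennnorm bound
  have hae_z : ∀ x : ℝ, x ∈ {y : ℝ | v y = w y} →
      (‖f x‖₊ : ℝ≥0∞) ≤ ENNReal.ofReal G * ∫⁻ z, K z x := by
    intro x hx
    have h1 : (‖f x‖₊ : ℝ≥0∞) = ENNReal.ofReal G *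
        (‖∫ z : ℝ, (v (x + z) - v x) / |z| ^ (1 + l)‖₊ : ℝ≥0∞) := by
      simp only [hfdef, nnnorm_mul, nnnorm_neg, ENNReal.coe_mul,
        Real.enorm_eq_ofReal hG0.le]
      rw [← enorm_eq_nnnorm G, Real.enorm_eq_ofReal hG0.le]
    rw [h1]
    refine mul_le_mul_right ?_ _
    refine le_trans (enorm_integral_le_lintegral_enorm _) (le_of_eq ?_)
    refine lintegral_congr_ae ?_
    filter_upwards [ae_translate hvw x, ae_ne_zero] with z hz hz0
    rw [hz, hx]
    simp only [hKdef, hddef]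
    rw [enorm_eq_nnnorm, div_eq_mul_inv, nnnorm_mul, nnnorm_inv, ENNReal.coe_mul, ENNReal.coe_inv, ← div_eq_mul_inv]
    · congr 1
      exact Real.enorm_eq_ofReal (Real.rpow_nonneg (abs_nonneg z) _)
    · simp only [ne_eq, nnnorm_eq_zero]
      exact ne_of_gt (Real.rpow_pos_of_pos (abs_pos.mpr hz0) _)
  have hae_bound : ∀ᵐ x ∂volume, (‖f x‖₊ : ℝ≥0∞) ≤ ENNReal.ofReal G * ∫⁻ z, K z x := by
    filter_upwards [hvw] with x hx using hae_z x hx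
  -- split the kernel
  set S1 : Set ℝ := {z : ℝ | |z| ≤ r} with hS1def
  set S2 : Set ℝ := {z : ℝ | r < |z|} with hS2def
  have hS1m : MeasurableSet S1 := measurableSet_le measurable_abs measurable_const
  have hS2m : MeasurableSet S2 := measurableSet_lt measurable_const measurable_abs
  set K1 : ℝ → ℝ → ℝ≥0∞ := fun z x => S1.indicator (fun z => K z x) z with hK1def
  set K2 : ℝ → ℝ → ℝ≥0∞ := fun z x => S2.indicator (fun z => K z x) z with hK2def
  have hind : ∀ (S : Set ℝ), MeasurableSet S →
      Measurable (Function.uncurry (fun z x => S.indicator (fun z => K z x) z)) := by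
    intro S hS
    have heq : Function.uncurry (fun (z x : ℝ) => S.indicator (fun z => K z x) z) =
        (S ×ˢ (univ : Set ℝ)).indicator (Function.uncurry K) := by
      ext p
      by_cases hp : p.1 ∈ S
      · rw [show Function.uncurry (fun (z x : ℝ) => S.indicator (fun z => K z x) z) p =
          S.indicator (fun z => K z p.2) p.1 from rfl,
          indicator_of_mem hp, indicator_of_mem (by simp [hp])]
        rfl
      · rw [show Function.uncurry (fun (z x : ℝ) => S.indicator (fun z => K z x) z) p =
          S.indicator (fun z => K z p.2) p.1 from rfl,
          indicator_of_notMem hp, indicator_of_notMem (by simp [hp])]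
    rw [heq]
    exact hKm.indicator (hS.prod MeasurableSet.univ)
  have hK1m : Measurable (Function.uncurry K1) := hind S1 hS1m
  have hK2m : Measurable (Function.uncurry K2) := hind S2 hS2m
  have hKsplit : ∀ z x, K z x = K1 z x + K2 z x := by
    intro z x
    simp only [hK1def, hK2def]
    rcases le_or_gt |z| r with hz | hz
    · rw [indicator_of_mem (show z ∈ S1 from hz),
        indicator_of_notMem (show z ∉ S2 from not_lt.mpr hz), add_zero]
    · rw [indicator_of_notMem (show z ∉ S1 from not_le.mpr hz),
        indicator_of_mem (show z ∈ S2 from hz), zero_add]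
  -- basic quantities
  set E' : ℝ≥0∞ := ∫⁻ x, (‖w' x‖₊ : ℝ≥0∞) ^ (2:ℝ) ∂μ' with hE'def
  set D' : ℝ≥0∞ := E' ^ (1/2:ℝ) with hD'def
  set Ev : ℝ≥0∞ := ∫⁻ x, (‖w x‖₊ : ℝ≥0∞) ^ (2:ℝ) with hEvdef
  set Dv : ℝ≥0∞ := Ev ^ (1/2:ℝ) with hDvdef
  have hww' : ∫⁻ x, (‖w' x‖₊ : ℝ≥0∞) ^ (2:ℝ) = ∫⁻ x, (‖v' x‖₊ : ℝ≥0∞) ^ (2:ℝ) :=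
    lintegral_congr_ae (hvw'.mono fun x hx => by simp only [← hx])
  have hww : Ev = ∫⁻ x, (‖v x‖₊ : ℝ≥0∞) ^ (2:ℝ) :=
    lintegral_congr_ae (hvw.mono fun x hx => by simp only [← hx])
  have hE'fin : E' ≠ ∞ := by
    refine ne_top_of_le_ne_top ?_ (setLIntegral_le_lintegral A' _)
    rw [hww']
    exact (lintegral_sq_lt_top hv'2).ne
  have hEvfin : Ev ≠ ∞ := by rw [hww]; exact (lintegral_sq_lt_top hv2).ne
  have hD'fin : D' ≠ ∞ := ENNReal.rpow_ne_top_of_nonneg (by norm_num) hE'fin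
  have hDvfin : Dv ≠ ∞ := ENNReal.rpow_ne_top_of_nonneg (by norm_num) hEvfin
  have hsq : ∀ b : ℝ≥0∞, b ^ (2:ℝ) = b * b := fun b => by
    rw [show (2:ℝ) = ((2:ℕ):ℝ) by norm_num, ENNReal.rpow_natCast, sq]
  -- the diff estimate for small z
  have claim_small : ∀ z : ℝ, z ≠ 0 → z ∈ S1 →
      (∫⁻ x, K z x ^ (2:ℝ) ∂μ) ^ (1/2:ℝ) ≤ ENNReal.ofReal (|z| ^ (-l)) * D' := by
    intro z hz0 hzr
    have hzr' : |z| ≤ r := hzr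
    -- FTC bound on the difference
    have step_diff : ∫⁻ x, ((‖w (x + z) - w x‖₊ : ℝ≥0∞)) ^ (2:ℝ) ∂μ ≤
        ENNReal.ofReal |z| * (ENNReal.ofReal |z| * E') := by
      have sub1 : ∫⁻ x, ((‖w (x + z) - w x‖₊ : ℝ≥0∞)) ^ (2:ℝ) ∂μ =
          ∫⁻ x, ((‖v (x + z) - v x‖₊ : ℝ≥0∞)) ^ (2:ℝ) ∂μ := by
        refine lintegral_congr_ae (ae_restrict_of_ae ?_)
        have htr : ∀ᵐ x : ℝ, v (x + z) = w (x + z) := by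
          filter_upwards [ae_translate hvw z] with x hx
          rwa [add_comm z x] at hx
        filter_upwards [hvw, htr] with x hx hxz
        rw [← hx, ← hxz]
      rw [sub1]
      have sub2 : ∀ᵐ x ∂μ, ((‖v (x + z) - v x‖₊ : ℝ≥0∞)) ^ (2:ℝ) ≤
          ENNReal.ofReal |z| * ∫⁻ t in Ι 0 z, ((‖w' (t + x)‖₊ : ℝ≥0∞)) ^ (2:ℝ) := by
        show ∀ᵐ x ∂μ, _
        rw [hμdef]
        filter_upwards [ae_restrict_mem hAm] with x hx
        have hxR : R < |x| := hx
        have hseg : ∀ y ∈ uIcc x (x + z), y ≠ 0 := by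
          intro y hy
          have hxy : |y - x| ≤ |z| := by
            rcases le_total x (x + z) with hc | hc
            · rw [uIcc_of_le hc] at hy
              have h0z : 0 ≤ z := by linarith [hy.1, hy.2]
              rw [abs_of_nonneg (by linarith [hy.1] : 0 ≤ y - x), abs_of_nonneg h0z]
              linarith [hy.2]
            · rw [uIcc_of_ge hc] at hy
              have h0z : z ≤ 0 := by linarith [hy.1, hy.2]
              rw [abs_of_nonpos (by linarith [hy.2] : y - x ≤ 0), abs_of_nonpos h0z]
              linarith [hy.1]
          have hy1 : |x| - |z| ≤ |y| := by
            have h1 : |x| - |y| ≤ |x - y| := abs_sub_abs_le_abs_sub x y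
            have h2 : |x - y| = |y - x| := abs_sub_comm x y
            linarith
          have hy0 : 0 < |y| := by linarith
          exact abs_pos.mp hy0
        have hftc := ftc_sq_bound hderiv hv'2 x z hseg
        have hIw : ∫⁻ s in Ι x (x + z), ((‖v' s‖₊ : ℝ≥0∞)) ^ (2:ℝ) =
            ∫⁻ t in Ι 0 z, ((‖w' (t + x)‖₊ : ℝ≥0∞)) ^ (2:ℝ) := by
          have hcongr : ∫⁻ s in Ι x (x + z), ((‖v' s‖₊ : ℝ≥0∞)) ^ (2:ℝ) =
              ∫⁻ s in Ι x (x + z), ((‖w' s‖₊ : ℝ≥0∞)) ^ (2:ℝ) :=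
            lintegral_congr_ae (ae_restrict_of_ae (hvw'.mono fun s hs => by simp only [← hs]))
          have hIff : ∀ t : ℝ, t ∈ Ι (0:ℝ) z ↔ t + x ∈ Ι x (x + z) := by
            intro t
            rcases le_total 0 z with hz' | hz'
            · rw [uIoc_of_le hz', uIoc_of_le (by linarith : x ≤ x + z)]
              simp only [mem_Ioc]
              constructor <;> intro h <;> exact ⟨by linarith [h.1], by linarith [h.2]⟩
            · rw [uIoc_comm, uIoc_of_le hz', uIoc_comm x, uIoc_of_le (by linarith : x + z ≤ x)]
              simp only [mem_Ioc]
              constructor <;> intro h <;> exact ⟨by linarith [h.1], by linarith [h.2]⟩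
          rw [hcongr]
          exact (setLIntegral_translate_eq (fun s => ((‖w' s‖₊ : ℝ≥0∞)) ^ (2:ℝ))
            measurableSet_uIoc x hIff).symm
        rw [← hIw]
        exact hftc
      calc ∫⁻ x, ((‖v (x + z) - v x‖₊ : ℝ≥0∞)) ^ (2:ℝ) ∂μ
          ≤ ∫⁻ x, (ENNReal.ofReal |z| *
              ∫⁻ t in Ι 0 z, ((‖w' (t + x)‖₊ : ℝ≥0∞)) ^ (2:ℝ)) ∂μ := lintegral_mono_ae sub2
        _ = ENNReal.ofReal |z| *
              ∫⁻ x, (∫⁻ t in Ι 0 z, ((‖w' (t + x)‖₊ : ℝ≥0∞)) ^ (2:ℝ)) ∂μ :=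
            lintegral_const_mul' _ _ ENNReal.ofReal_ne_top
        _ ≤ ENNReal.ofReal |z| * (ENNReal.ofReal |z| * E') := by
            refine mul_le_mul_right ?_ _
            have hswap : ∫⁻ x, (∫⁻ t in Ι 0 z, ((‖w' (t + x)‖₊ : ℝ≥0∞)) ^ (2:ℝ)) ∂μ =
                ∫⁻ t in Ι 0 z, (∫⁻ x, ((‖w' (t + x)‖₊ : ℝ≥0∞)) ^ (2:ℝ) ∂μ) := by
              refine lintegral_lintegral_swap ?_
              exact (Measurable.aemeasurable (by
                exact ((hw'm.comp (measurable_snd.add measurable_fst)).enorm).pow_const _))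
            rw [hswap]
            have hinner : ∀ t : ℝ, t ∈ Ι (0:ℝ) z →
                ∫⁻ x, ((‖w' (t + x)‖₊ : ℝ≥0∞)) ^ (2:ℝ) ∂μ ≤ E' := by
              intro t ht
              have htz : |t| ≤ |z| := by
                rcases le_total 0 z with hz' | hz'
                · rw [uIoc_of_le hz'] at ht
                  rw [abs_of_nonneg (le_of_lt ht.1), abs_of_nonneg hz']
                  exact ht.2
                · rw [uIoc_comm, uIoc_of_le hz'] at ht
                  rw [abs_of_nonpos ht.2, abs_of_nonpos hz']
                  linarith [ht.1]
              have hmem : ∀ x ∈ A, x + t ∈ A' := by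
                intro x hx
                have hxR : R < |x| := hx
                show R - r < |x + t|
                have h1 : |x| - |t| ≤ |x + t| := by
                  have := abs_sub_abs_le_abs_sub x (-t)
                  simp only [sub_neg_eq_add, abs_neg] at this
                  linarith
                linarith
              have heqc : (fun x : ℝ => ((‖w' (t + x)‖₊ : ℝ≥0∞)) ^ (2:ℝ)) =
                  fun x : ℝ => ((‖w' (x + t)‖₊ : ℝ≥0∞)) ^ (2:ℝ) := by
                funext x; rw [add_comm]
              rw [hμdef, heqc]
              exact setLIntegral_translate_le (fun s => ((‖w' s‖₊ : ℝ≥0∞)) ^ (2:ℝ))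
                hAm hA'm t hmem
            calc ∫⁻ t in Ι 0 z, (∫⁻ x, ((‖w' (t + x)‖₊ : ℝ≥0∞)) ^ (2:ℝ) ∂μ)
                ≤ ∫⁻ _ in Ι (0:ℝ) z, E' := by
                  refine lintegral_mono_ae ?_
                  filter_upwards [ae_restrict_mem measurableSet_uIoc] with t ht
                  exact hinner t ht
              _ = ENNReal.ofReal |z| * E' := by
                  rw [setLIntegral_const, mul_comm]
                  congr 1
                  rw [uIoc, Real.volume_Ioc, max_sub_min_eq_abs, sub_zero]
    -- divide by the kernel denominator
    have step_K : ∫⁻ x, K z x ^ (2:ℝ) ∂μ =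
        (∫⁻ x, ((‖w (x + z) - w x‖₊ : ℝ≥0∞)) ^ (2:ℝ) ∂μ) * ((d z * d z)⁻¹) := by
      have h1 : ∀ x : ℝ, K z x ^ (2:ℝ) =
          ((‖w (x + z) - w x‖₊ : ℝ≥0∞)) ^ (2:ℝ) * (d z * d z)⁻¹ := by
        intro x
        rw [hKdef]
        rw [ENNReal.div_rpow_of_nonneg _ _ (by norm_num : (0:ℝ) ≤ 2), hsq (d z),
          div_eq_mul_inv]
      simp_rw [h1]
      exact lintegral_mul_const' _ _ (by simp [ENNReal.inv_ne_top,
        mul_ne_zero (hd_pos z hz0) (hd_pos z hz0)])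
    have hdd : ((d z * d z)⁻¹) ^ (1/2:ℝ) = (d z)⁻¹ := by
      rw [ENNReal.inv_rpow, sq_rpow_half]
    have hconst : ENNReal.ofReal |z| * (d z)⁻¹ = ENNReal.ofReal (|z| ^ (-l)) := by
      have h1 : |z| ^ (-l) = |z| ^ (1 - (1 + l)) := by norm_num
      have h2 : (0:ℝ) < |z| := abs_pos.mpr hz0
      rw [h1, Real.rpow_sub h2, Real.rpow_one,
        ENNReal.ofReal_div_of_pos (Real.rpow_pos_of_pos h2 _), div_eq_mul_inv, hddef]
    calc (∫⁻ x, K z x ^ (2:ℝ) ∂μ) ^ (1/2:ℝ)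
        ≤ ((ENNReal.ofReal |z| * (ENNReal.ofReal |z| * E')) * (d z * d z)⁻¹) ^ (1/2:ℝ) := by
          rw [step_K]
          exact ENNReal.rpow_le_rpow (mul_le_mul_left step_diff _) (by norm_num)
      _ = ENNReal.ofReal (|z| ^ (-l)) * D' := by
          rw [show ENNReal.ofReal |z| * (ENNReal.ofReal |z| * E') * (d z * d z)⁻¹ =
            (ENNReal.ofReal |z| * ENNReal.ofReal |z|) * E' * (d z * d z)⁻¹ by ring]
          rw [ENNReal.mul_rpow_of_nonneg _ _ (by norm_num : (0:ℝ) ≤ 1/2), hdd,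
            ENNReal.mul_rpow_of_nonneg _ _ (by norm_num : (0:ℝ) ≤ 1/2), sq_rpow_half,
            hD'def]
          rw [show ENNReal.ofReal |z| * E' ^ (1/2:ℝ) * (d z)⁻¹ =
            (ENNReal.ofReal |z| * (d z)⁻¹) * E' ^ (1/2:ℝ) by ring, hconst]
  -- the estimate for large z
  have claim_large : ∀ z : ℝ, z ≠ 0 →
      (∫⁻ x, K z x ^ (2:ℝ) ∂μ) ^ (1/2:ℝ) ≤ ENNReal.ofReal (|z| ^ (-1 - l)) * (Dv + Dv) := by
    intro z hz0
    have hz : (0:ℝ) < |z| := abs_pos.mpr hz0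
    have step_diff : (∫⁻ x, ((‖w (x + z) - w x‖₊ : ℝ≥0∞)) ^ (2:ℝ) ∂μ) ^ (1/2:ℝ) ≤
        Dv + Dv := by
      have htri : ∀ x : ℝ, ((‖w (x + z) - w x‖₊ : ℝ≥0∞)) ^ (2:ℝ) ≤
          (((‖w (x + z)‖₊ : ℝ≥0∞)) + ((‖w x‖₊ : ℝ≥0∞))) ^ (2:ℝ) := by
        intro x
        refine ENNReal.rpow_le_rpow ?_ (by norm_num)
        rw [← ENNReal.coe_add]
        exact_mod_cast nnnorm_sub_le _ _
      have h1 : (∫⁻ x, ((‖w (x + z) - w x‖₊ : ℝ≥0∞)) ^ (2:ℝ) ∂μ) ^ (1/2:ℝ) ≤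
          (∫⁻ x, (((‖w (x + z)‖₊ : ℝ≥0∞)) + ((‖w x‖₊ : ℝ≥0∞))) ^ (2:ℝ) ∂μ) ^ (1/2:ℝ) :=
        ENNReal.rpow_le_rpow (lintegral_mono htri) (by norm_num)
      have h2 : (∫⁻ x, (((‖w (x + z)‖₊ : ℝ≥0∞)) + ((‖w x‖₊ : ℝ≥0∞))) ^ (2:ℝ) ∂μ) ^ (1/2:ℝ) ≤
          (∫⁻ x, ((‖w (x + z)‖₊ : ℝ≥0∞)) ^ (2:ℝ) ∂μ) ^ (1/2:ℝ) +
          (∫⁻ x, ((‖w x‖₊ : ℝ≥0∞)) ^ (2:ℝ) ∂μ) ^ (1/2:ℝ) :=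
        ENNReal.lintegral_Lp_add_le
          ((hwm.comp (measurable_id.add_const z)).enorm.aemeasurable)
          (hwm.enorm.aemeasurable) one_le_two
      have h3 : (∫⁻ x, ((‖w (x + z)‖₊ : ℝ≥0∞)) ^ (2:ℝ) ∂μ) ^ (1/2:ℝ) ≤ Dv := by
        refine ENNReal.rpow_le_rpow ?_ (by norm_num)
        rw [hμdef]
        have := setLIntegral_translate_le (fun s => ((‖w s‖₊ : ℝ≥0∞)) ^ (2:ℝ))
          hAm MeasurableSet.univ z (fun x _ => mem_univ _)
        rwa [Measure.restrict_univ] at this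
      have h4 : (∫⁻ x, ((‖w x‖₊ : ℝ≥0∞)) ^ (2:ℝ) ∂μ) ^ (1/2:ℝ) ≤ Dv := by
        refine ENNReal.rpow_le_rpow ?_ (by norm_num)
        rw [hμdef]
        exact setLIntegral_le_lintegral _ _
      exact le_trans h1 (le_trans h2 (add_le_add h3 h4))
    have step_K : ∫⁻ x, K z x ^ (2:ℝ) ∂μ =
        (∫⁻ x, ((‖w (x + z) - w x‖₊ : ℝ≥0∞)) ^ (2:ℝ) ∂μ) * ((d z * d z)⁻¹) := by
      have h1 : ∀ x : ℝ, K z x ^ (2:ℝ) =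
          ((‖w (x + z) - w x‖₊ : ℝ≥0∞)) ^ (2:ℝ) * (d z * d z)⁻¹ := by
        intro x
        rw [hKdef]
        rw [ENNReal.div_rpow_of_nonneg _ _ (by norm_num : (0:ℝ) ≤ 2), hsq (d z),
          div_eq_mul_inv]
      simp_rw [h1]
      exact lintegral_mul_const' _ _ (by simp [ENNReal.inv_ne_top,
        mul_ne_zero (hd_pos z hz0) (hd_pos z hz0)])
    have hconst : (d z)⁻¹ = ENNReal.ofReal (|z| ^ (-1 - l)) := by
      rw [show (-1 - l : ℝ) = -(1 + l) by ring, Real.rpow_neg (abs_nonneg z),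
        ENNReal.ofReal_inv_of_pos (Real.rpow_pos_of_pos hz _), hddef]
    calc (∫⁻ x, K z x ^ (2:ℝ) ∂μ) ^ (1/2:ℝ)
        = (∫⁻ x, ((‖w (x + z) - w x‖₊ : ℝ≥0∞)) ^ (2:ℝ) ∂μ) ^ (1/2:ℝ) * (d z)⁻¹ := by
          rw [step_K, ENNReal.mul_rpow_of_nonneg _ _ (by norm_num : (0:ℝ) ≤ 1/2),
            ENNReal.inv_rpow, sq_rpow_half]
      _ ≤ (Dv + Dv) * (d z)⁻¹ := mul_le_mul_left step_diff _
      _ = ENNReal.ofReal (|z| ^ (-1 - l)) * (Dv + Dv) := by rw [hconst, mul_comm]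
  -- assemble
  set g1 : ℝ → ℝ≥0∞ := fun x => ∫⁻ z, K1 z x with hg1def
  set g2 : ℝ → ℝ≥0∞ := fun x => ∫⁻ z, K2 z x with hg2def
  have hg1m : Measurable g1 := Measurable.lintegral_prod_left hK1m
  have hg2m : Measurable g2 := Measurable.lintegral_prod_left hK2m
  have hKz : ∀ x, ∫⁻ z, K z x = g1 x + g2 x := by
    intro x
    have heq : (fun z => K z x) = fun z => K1 z x + K2 z x := funext fun z => hKsplit z x
    rw [heq]
    exact lintegral_add_left (hK1m.comp (measurable_id.prodMk measurable_const)) _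
  set c1 : ℝ := 2 * r ^ (1 - l) / (1 - l) with hc1def
  set c2 : ℝ := 2 * r ^ (-l) / l with hc2def
  have hc1nn : 0 ≤ c1 := div_nonneg (by positivity) (by linarith)
  have hc2nn : 0 ≤ c2 := div_nonneg (by positivity) hl0.le
  set NF : ℝ≥0∞ := (∫⁻ x, (‖f x‖₊ : ℝ≥0∞) ^ (2:ℝ) ∂μ) ^ (1/2:ℝ) with hNFdef
  set bound : ℝ≥0∞ :=
    ENNReal.ofReal G * (ENNReal.ofReal c1 * D' + ENNReal.ofReal c2 * (Dv + Dv)) with hbounddef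
  have hm_small : Measurable fun z : ℝ => ENNReal.ofReal (|z| ^ (-l)) := by
    have he : (fun z : ℝ => |z| ^ (-l)) = fun z : ℝ => (|z| ^ l)⁻¹ :=
      funext fun z => Real.rpow_neg (abs_nonneg z) l
    have hm : Measurable fun z : ℝ => |z| ^ (-l) := by
      rw [he]
      exact ((continuous_abs.rpow_const fun x => Or.inr hl0.le).measurable).inv
    exact hm.ennreal_ofReal
  have hm_large : Measurable fun z : ℝ => ENNReal.ofReal (|z| ^ (-1 - l)) := by
    have he : (fun z : ℝ => |z| ^ (-1 - l)) = fun z : ℝ => (|z| ^ (1 + l))⁻¹ := by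
      funext z
      rw [show (-1 - l : ℝ) = -(1 + l) by ring, Real.rpow_neg (abs_nonneg z)]
    have hm : Measurable fun z : ℝ => |z| ^ (-1 - l) := by
      rw [he]; exact habs_rpow_cont.measurable.inv
    exact hm.ennreal_ofReal
  have hsmall : ∫⁻ z, (∫⁻ x, K1 z x ^ (2:ℝ) ∂μ) ^ (1/2:ℝ) ≤ ENNReal.ofReal c1 * D' := by
    have hz : ∀ᵐ z : ℝ, (∫⁻ x, K1 z x ^ (2:ℝ) ∂μ) ^ (1/2:ℝ) ≤
        S1.indicator (fun z => ENNReal.ofReal (|z| ^ (-l)) * D') z := by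
      filter_upwards [ae_ne_zero] with z hz0
      by_cases hzS : z ∈ S1
      · rw [indicator_of_mem hzS]
        have heq1 : ∫⁻ x, K1 z x ^ (2:ℝ) ∂μ = ∫⁻ x, K z x ^ (2:ℝ) ∂μ := by
          refine lintegral_congr fun x => ?_
          rw [show K1 z x = S1.indicator (fun z => K z x) z from rfl, indicator_of_mem hzS]
        rw [heq1]
        exact claim_small z hz0 hzS
      · rw [indicator_of_notMem hzS]
        have heq0 : ∫⁻ x, K1 z x ^ (2:ℝ) ∂μ = 0 := by
          have : ∀ x, K1 z x ^ (2:ℝ) = 0 := by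
            intro x
            rw [show K1 z x = S1.indicator (fun z => K z x) z from rfl,
              indicator_of_notMem hzS, ENNReal.zero_rpow_of_pos (by norm_num)]
          simp [this]
        rw [heq0, ENNReal.zero_rpow_of_pos (by norm_num)]
    calc ∫⁻ z, (∫⁻ x, K1 z x ^ (2:ℝ) ∂μ) ^ (1/2:ℝ)
        ≤ ∫⁻ z, S1.indicator (fun z => ENNReal.ofReal (|z| ^ (-l)) * D') z :=
          lintegral_mono_ae hz
      _ = ∫⁻ z in S1, ENNReal.ofReal (|z| ^ (-l)) * D' := lintegral_indicator hS1m _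
      _ = (∫⁻ z in S1, ENNReal.ofReal (|z| ^ (-l))) * D' :=
          lintegral_mul_const' D' _ hD'fin
      _ ≤ ENNReal.ofReal c1 * D' := mul_le_mul_left (const_small hl0 hl1 hr) _
  have hlarge : ∫⁻ z, (∫⁻ x, K2 z x ^ (2:ℝ) ∂μ) ^ (1/2:ℝ) ≤
      ENNReal.ofReal c2 * (Dv + Dv) := by
    have hz : ∀ᵐ z : ℝ, (∫⁻ x, K2 z x ^ (2:ℝ) ∂μ) ^ (1/2:ℝ) ≤
        S2.indicator (fun z => ENNReal.ofReal (|z| ^ (-1 - l)) * (Dv + Dv)) z := by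
      filter_upwards [ae_ne_zero] with z hz0
      by_cases hzS : z ∈ S2
      · rw [indicator_of_mem hzS]
        have heq1 : ∫⁻ x, K2 z x ^ (2:ℝ) ∂μ = ∫⁻ x, K z x ^ (2:ℝ) ∂μ := by
          refine lintegral_congr fun x => ?_
          rw [show K2 z x = S2.indicator (fun z => K z x) z from rfl, indicator_of_mem hzS]
        rw [heq1]
        exact claim_large z hz0
      · rw [indicator_of_notMem hzS]
        have heq0 : ∫⁻ x, K2 z x ^ (2:ℝ) ∂μ = 0 := by
          have : ∀ x, K2 z x ^ (2:ℝ) = 0 := by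
            intro x
            rw [show K2 z x = S2.indicator (fun z => K z x) z from rfl,
              indicator_of_notMem hzS, ENNReal.zero_rpow_of_pos (by norm_num)]
          simp [this]
        rw [heq0, ENNReal.zero_rpow_of_pos (by norm_num)]
    calc ∫⁻ z, (∫⁻ x, K2 z x ^ (2:ℝ) ∂μ) ^ (1/2:ℝ)
        ≤ ∫⁻ z, S2.indicator (fun z => ENNReal.ofReal (|z| ^ (-1 - l)) * (Dv + Dv)) z :=
          lintegral_mono_ae hz
      _ = ∫⁻ z in S2, ENNReal.ofReal (|z| ^ (-1 - l)) * (Dv + Dv) := lintegral_indicator hS2m _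
      _ = (∫⁻ z in S2, ENNReal.ofReal (|z| ^ (-1 - l))) * (Dv + Dv) :=
          lintegral_mul_const' _ _ (by simp [ENNReal.add_ne_top, hDvfin])
      _ ≤ ENNReal.ofReal c2 * (Dv + Dv) := mul_le_mul_left (const_large hl0 hr) _
  have hbound : NF ≤ bound := by
    have hmono : ∫⁻ x, (‖f x‖₊ : ℝ≥0∞) ^ (2:ℝ) ∂μ ≤
        ∫⁻ x, (ENNReal.ofReal G * (g1 x + g2 x)) ^ (2:ℝ) ∂μ := by
      refine lintegral_mono_ae ?_
      filter_upwards [ae_restrict_of_ae hae_bound] with x hx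
      refine ENNReal.rpow_le_rpow ?_ (by norm_num)
      rw [← hKz x]
      exact hx
    have hstep1 : NF ≤ ENNReal.ofReal G * (∫⁻ x, (g1 x + g2 x) ^ (2:ℝ) ∂μ) ^ (1/2:ℝ) := by
      calc NF ≤ (∫⁻ x, (ENNReal.ofReal G * (g1 x + g2 x)) ^ (2:ℝ) ∂μ) ^ (1/2:ℝ) :=
            ENNReal.rpow_le_rpow hmono (by norm_num)
        _ = ENNReal.ofReal G * (∫⁻ x, (g1 x + g2 x) ^ (2:ℝ) ∂μ) ^ (1/2:ℝ) := by
            have hpt : ∀ x : ℝ, (ENNReal.ofReal G * (g1 x + g2 x)) ^ (2:ℝ) =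
                (ENNReal.ofReal G) ^ (2:ℝ) * (g1 x + g2 x) ^ (2:ℝ) := fun x =>
              ENNReal.mul_rpow_of_nonneg _ _ (by norm_num)
            simp_rw [hpt]
            rw [lintegral_const_mul' _ _
              (ENNReal.rpow_ne_top_of_nonneg (by norm_num) ENNReal.ofReal_ne_top),
              ENNReal.mul_rpow_of_nonneg _ _ (by norm_num : (0:ℝ) ≤ 1/2),
              ← ENNReal.rpow_mul, show (2:ℝ) * (1/2) = 1 by norm_num, ENNReal.rpow_one]
    have htri : (∫⁻ x, (g1 x + g2 x) ^ (2:ℝ) ∂μ) ^ (1/2:ℝ) ≤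
        (∫⁻ x, g1 x ^ (2:ℝ) ∂μ) ^ (1/2:ℝ) + (∫⁻ x, g2 x ^ (2:ℝ) ∂μ) ^ (1/2:ℝ) :=
      ENNReal.lintegral_Lp_add_le hg1m.aemeasurable hg2m.aemeasurable one_le_two
    have hmink1 : (∫⁻ x, g1 x ^ (2:ℝ) ∂μ) ^ (1/2:ℝ) ≤
        ∫⁻ z, (∫⁻ x, K1 z x ^ (2:ℝ) ∂μ) ^ (1/2:ℝ) := lintegral_minkowski_two hK1m
    have hmink2 : (∫⁻ x, g2 x ^ (2:ℝ) ∂μ) ^ (1/2:ℝ) ≤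
        ∫⁻ z, (∫⁻ x, K2 z x ^ (2:ℝ) ∂μ) ^ (1/2:ℝ) := lintegral_minkowski_two hK2m
    calc NF ≤ ENNReal.ofReal G * (∫⁻ x, (g1 x + g2 x) ^ (2:ℝ) ∂μ) ^ (1/2:ℝ) := hstep1
      _ ≤ ENNReal.ofReal G * (ENNReal.ofReal c1 * D' + ENNReal.ofReal c2 * (Dv + Dv)) := by
          refine mul_le_mul_right ?_ _
          exact le_trans htri (add_le_add (le_trans hmink1 hsmall) (le_trans hmink2 hlarge))
  have h1fin : ENNReal.ofReal c1 * D' ≠ ∞ := ENNReal.mul_ne_top ENNReal.ofReal_ne_top hD'fin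
  have h2fin : ENNReal.ofReal c2 * (Dv + Dv) ≠ ∞ :=
    ENNReal.mul_ne_top ENNReal.ofReal_ne_top (by simp [ENNReal.add_ne_top, hDvfin])
  have hboundfin : bound ≠ ∞ :=
    ENNReal.mul_ne_top ENNReal.ofReal_ne_top (by simp [ENNReal.add_ne_top, h1fin, h2fin])
  have hNFfin : NF ≠ ∞ := ne_top_of_le_ne_top hboundfin hbound
  have hfaem : AEStronglyMeasurable f μ :=
    (hfwm.aestronglyMeasurable.congr hffw.symm).restrict
  have hmem : MemLp f 2 μ := by
    refine ⟨hfaem, ?_⟩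
    rw [eLpNorm_eq_lintegral_rpow_enorm_toReal (by norm_num) (by norm_num), ENNReal.toReal_ofNat]
    exact lt_top_iff_ne_top.mpr (by rw [show (1:ℝ)/2 = 1/2 from rfl]; exact hNFfin)
  constructor
  · exact hmem
  · have hE'v : E' = ∫⁻ x, (‖v' x‖₊ : ℝ≥0∞) ^ (2:ℝ) ∂μ' :=
      lintegral_congr_ae (ae_restrict_of_ae (hvw'.mono fun x hx => by simp only [← hx]))
    have hL : Real.sqrt (∫ x in A,
        (-G * ∫ z : ℝ, (v (x + z) - v x) / |z| ^ (1 + l)) ^ 2) = NF.toReal := by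
      rw [hNFdef]
      exact sqrt_integral_sq_eq f μ hfaem
    have hR1 : Real.sqrt (∫ x in A', (v' x) ^ 2) = D'.toReal := by
      rw [hD'def, hE'v]
      exact sqrt_integral_sq_eq v' μ' hv'2.1.restrict
    have hR2 : Real.sqrt (∫ x : ℝ, (v x) ^ 2) = Dv.toReal := by
      rw [hDvdef, hww]
      exact sqrt_integral_sq_eq v volume hv2.1
    rw [hL, hR1, hR2]
    have h1l : (1 : ℝ) - l ≠ 0 := by linarith
    have hlne : l ≠ 0 := hl0.ne'
    have hrl : r ^ l ≠ 0 := ne_of_gt (Real.rpow_pos_of_pos hr _)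
    calc NF.toReal ≤ bound.toReal := ENNReal.toReal_mono hboundfin hbound
      _ = G * (c1 * D'.toReal + c2 * (Dv.toReal + Dv.toReal)) := by
          rw [hbounddef, ENNReal.toReal_mul, ENNReal.toReal_add h1fin h2fin,
            ENNReal.toReal_mul, ENNReal.toReal_mul, ENNReal.toReal_add hDvfin hDvfin,
            ENNReal.toReal_ofReal hG0.le, ENNReal.toReal_ofReal hc1nn,
            ENNReal.toReal_ofReal hc2nn]
      _ = 2 * G * r ^ (1 - l) / (1 - l) * D'.toReal + 4 * G / (l * r ^ l) * Dv.toReal := by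
          rw [hc1def, hc2def, Real.rpow_neg hr.le]
          field_simp
          ring
end

section
/- Let λ ∈ (0,1) and let Φ : ℝ → ℝ be locally Lipschitz with |Φ(x)| ≤ M(1 + |x|^{λ'}) for some 0 < λ' < λ and |Φ'(x)| ≤ L/(1 + |x|^{1-λ}) for a.e. x. Then for every x ∈ ℝ the integral ∫_ℝ |Φ(x+z) - Φ(x)|/|z|^{1+λ} dz is finite, so L_λ[Φ](x) is well-defined by the Lévy-Khintchine formula, and L_λ[Φ] is continuous and bounded on ℝ. -/
open MeasureTheory Set Filter
open intervalIntegral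
open scoped Topology NNReal

private lemma lip_ftc {f : ℝ → ℝ} {K : NNReal} (hf : LipschitzWith K f) (c d : ℝ) :
    f d - f c = ∫ s in c..d, deriv f s := by
  have hcont : Continuous f := hf.continuous
  set t : ℕ → ℝ := fun n => 1 / (n + 1) with ht
  have htpos : ∀ n, 0 < t n := fun n => by positivity
  have ht0 : Tendsto t atTop (𝓝 0) := tendsto_one_div_add_atTop_nhds_zero_nat
  have hseq : ∀ s : ℝ, Tendsto (fun n => s + t n) atTop (𝓝[≠] s) := by
    intro s
    apply tendsto_nhdsWithin_of_tendsto_nhds_of_eventually_within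
    · simpa using tendsto_const_nhds.add ht0
    · exact Eventually.of_forall fun n => by
        have := htpos n
        simp only [mem_compl_iff, mem_singleton_iff]
        intro h
        nlinarith [htpos n, congrArg (fun y => y - s) h]
  have prim : ∀ e : ℝ, Tendsto (fun n => (∫ x in e..(e + t n), f x) / t n) atTop (𝓝 (f e)) := by
    intro e
    have hD : HasDerivAt (fun u => ∫ x in e..u, f x) (f e) e :=
      integral_hasDerivAt_right (hcont.intervalIntegrable e e)
        (hcont.stronglyMeasurableAtFilter volume (𝓝 e)) hcont.continuousAt
    have h1 := (hasDerivAt_iff_tendsto_slope.mp hD).comp (hseq e)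
    refine h1.congr fun n => ?_
    show slope (fun u => ∫ x in e..u, f x) e (e + t n) = _
    rw [slope_def_field, integral_same, sub_zero, add_sub_cancel_left]
  -- dominated convergence
  have main : Tendsto (fun n => ∫ s in c..d, (f (s + t n) - f s) / t n) atTop
      (𝓝 (∫ s in c..d, deriv f s)) := by
    apply intervalIntegral.tendsto_integral_filter_of_dominated_convergence (bound := fun _ => (K : ℝ))
    · exact Eventually.of_forall fun n =>
        (((hcont.comp (continuous_id.add continuous_const)).sub hcont).div_const
          (t n)).aestronglyMeasurable.restrict
    · refine Eventually.of_forall fun n => Eventually.of_forall fun s _ => ?_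
      have hd : |f (s + t n) - f s| ≤ K * t n := by
        have := hf.dist_le_mul (s + t n) s
        simpa [Real.dist_eq, add_sub_cancel_left, abs_of_pos (htpos n)] using this
      rw [norm_div, Real.norm_eq_abs, Real.norm_eq_abs, abs_of_pos (htpos n),
        div_le_iff₀ (htpos n)]
      exact hd
    · exact intervalIntegrable_const
    · filter_upwards [hf.ae_differentiableAt (μ := volume)] with s hs
      intro _
      have h1 := (hasDerivAt_iff_tendsto_slope.mp hs.hasDerivAt).comp (hseq s)
      refine h1.congr fun n => ?_
      show slope f s (s + t n) = _
      rw [slope_def_field, add_sub_cancel_left]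
  -- compute the integrals
  have key : ∀ n, (∫ s in c..d, (f (s + t n) - f s) / t n) =
      ((∫ x in d..(d + t n), f x) - ∫ x in c..(c + t n), f x) / t n := by
    intro n
    have I : ∀ a b : ℝ, IntervalIntegrable f volume a b := fun a b => hcont.intervalIntegrable a b
    have I2 : ∀ a b : ℝ, IntervalIntegrable (fun s => f (s + t n)) volume a b := fun a b =>
      (hcont.comp (continuous_id.add continuous_const)).intervalIntegrable a b
    rw [intervalIntegral.integral_div, intervalIntegral.integral_sub (I2 c d) (I c d),
      intervalIntegral.integral_comp_add_right]
    have h1 := intervalIntegral.integral_add_adjacent_intervals (I (c + t n) d) (I d (d + t n))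
    have h2 := intervalIntegral.integral_add_adjacent_intervals (I c (c + t n)) (I (c + t n) d)
    congr 1
    linarith [h1, h2]
  have main2 : Tendsto (fun n => ∫ s in c..d, (f (s + t n) - f s) / t n) atTop
      (𝓝 (f d - f c)) := by
    exact ((prim d).sub (prim c)).congr fun n => by rw [key n, sub_div]
  exact (tendsto_nhds_unique main2 main)

private lemma loclip_ftc {Φ : ℝ → ℝ} (hlip : LocallyLipschitz Φ)
    (hint : ∀ a b : ℝ, IntervalIntegrable (deriv Φ) volume a b) (a b : ℝ) :
    Φ b - Φ a = ∫ s in a..b, deriv Φ s := by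
  set h : ℝ → ℝ := fun y => Φ y - ∫ s in (0:ℝ)..y, deriv Φ s with hh
  have hloc : IsLocallyConstant h := by
    rw [IsLocallyConstant.iff_eventually_eq]
    intro x
    obtain ⟨K, tset, htmem, hK⟩ := hlip x
    obtain ⟨ε, hε, hball⟩ := Metric.mem_nhds_iff.mp htmem
    have hδ : 0 < ε / 2 := by positivity
    have hIccsub : Icc (x - ε/2) (x + ε/2) ⊆ tset := by
      intro y hy
      apply hball
      rw [Metric.mem_ball, Real.dist_eq]
      rw [mem_Icc] at hy
      rw [abs_lt]
      constructor <;> nlinarith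
    obtain ⟨g, hg, heq⟩ := (hK.mono hIccsub).extend_real
    have hballsub : Metric.ball x (ε/2) ⊆ Icc (x - ε/2) (x + ε/2) := by
      intro y hy
      rw [Metric.mem_ball, Real.dist_eq, abs_lt] at hy
      rw [mem_Icc]
      constructor <;> linarith
    have hderiv_eq : ∀ u ∈ Metric.ball x (ε/2), deriv Φ u = deriv g u := by
      intro u hu
      apply Filter.EventuallyEq.deriv_eq
      exact eventually_of_mem (Metric.isOpen_ball.mem_nhds hu) fun v hv => heq (hballsub hv)
    filter_upwards [Metric.ball_mem_nhds x hδ] with y hy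
    have hx : x ∈ Metric.ball x (ε/2) := Metric.mem_ball_self hδ
    have huIcc : uIcc x y ⊆ Metric.ball x (ε/2) :=
      (convex_ball x (ε/2)).ordConnected.uIcc_subset hx hy
    have e1 : Φ y - Φ x = g y - g x := by
      rw [heq (hballsub hy), heq (hballsub hx)]
    have e2 : g y - g x = ∫ s in x..y, deriv g s := lip_ftc hg x y
    have e3 : (∫ s in x..y, deriv g s) = ∫ s in x..y, deriv Φ s := by
      apply intervalIntegral.integral_congr
      intro u hu
      exact (hderiv_eq u (huIcc hu)).symm
    have e4 : (∫ s in (0:ℝ)..y, deriv Φ s) - ∫ s in (0:ℝ)..x, deriv Φ s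
        = ∫ s in x..y, deriv Φ s :=
      intervalIntegral.integral_interval_sub_left (hint 0 y) (hint 0 x)
    simp only [hh]
    linarith [e1, e2, e3, e4]
  have := hloc.apply_eq_of_preconnectedSpace b a
  simp only [hh] at this
  have e4 : (∫ s in (0:ℝ)..b, deriv Φ s) - ∫ s in (0:ℝ)..a, deriv Φ s
      = ∫ s in a..b, deriv Φ s :=
    intervalIntegral.integral_interval_sub_left (hint 0 b) (hint 0 a)
  linarith

private lemma neg_half_integrable {f : ℝ → ℝ} {r : ℝ} (hf : ∀ x, f (-x) = f x)
    (h : IntegrableOn f (Ioi r)) : IntegrableOn f (Iio (-r)) := by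
  have A : MeasurableEmbedding (fun x : ℝ => -x) :=
    (Homeomorph.neg ℝ).isClosedEmbedding.measurableEmbedding
  have hpre : (fun x : ℝ => -x) ⁻¹' (Iio (-r)) = Ioi r := by
    ext x; simp only [mem_preimage, mem_Iio, mem_Ioi]; constructor <;> intro <;> linarith
  have hmap : volume.restrict (Iio (-r)) = Measure.map (fun x : ℝ => -x) (volume.restrict (Ioi r)) := by
    calc volume.restrict (Iio (-r))
        = (Measure.map (fun x : ℝ => -x) volume).restrict (Iio (-r)) := by
          rw [show (fun x : ℝ => -x) = Neg.neg from rfl, Measure.map_neg_eq_self]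
      _ = Measure.map (fun x : ℝ => -x) (volume.restrict ((fun x : ℝ => -x) ⁻¹' (Iio (-r)))) :=
          Measure.restrict_map A.measurable measurableSet_Iio
      _ = Measure.map (fun x : ℝ => -x) (volume.restrict (Ioi r)) := by rw [hpre]
  rw [IntegrableOn, hmap, A.integrable_map_iff]
  exact h.congr_fun (fun x _ => (hf x).symm) measurableSet_Ioi

private lemma neg_half_integral {f : ℝ → ℝ} {r : ℝ} (hf : ∀ x, f (-x) = f x) :
    ∫ z in Iio (-r), f z = ∫ z in Ioi r, f z := by
  have h2 := integral_comp_neg_Iic (-r) f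
  simp only [hf, neg_neg] at h2
  rw [setIntegral_congr_set Iio_ae_eq_Iic, h2]

private lemma half_pos_integrable {p r : ℝ} (hp : -1 < p) (hr : 0 < r) :
    IntegrableOn (fun z : ℝ => |z| ^ p) (Ioc 0 r) := by
  have hii : IntervalIntegrable (fun z : ℝ => z ^ p) volume 0 r :=
    intervalIntegral.intervalIntegrable_rpow' hp
  rw [intervalIntegrable_iff, uIoc_of_le hr.le] at hii
  exact hii.congr_fun (fun z hz => (abs_of_pos hz.1).symm ▸ rfl) measurableSet_Ioc

private lemma half_pos_integral {p r : ℝ} (hp : -1 < p) (hr : 0 < r) :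
    ∫ z in Ioc 0 r, |z| ^ p = r ^ (p + 1) / (p + 1) := by
  have h1 : ∫ z in Ioc 0 r, |z| ^ p = ∫ z in Ioc 0 r, z ^ p :=
    setIntegral_congr_fun measurableSet_Ioc (fun z hz => by rw [abs_of_pos hz.1])
  rw [h1, ← intervalIntegral.integral_of_le hr.le, integral_rpow (Or.inl hp),
    Real.zero_rpow (by linarith), sub_zero]

private lemma interval_integrable_abs_rpow {p r : ℝ} (hp : -1 < p) (hr : 0 < r) :
    IntervalIntegrable (fun z : ℝ => |z| ^ p) volume 0 r := by
  rw [intervalIntegrable_iff, uIoc_of_le hr.le]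
  exact half_pos_integrable hp hr

private lemma bulk_integrable {p r : ℝ} (hp : -1 < p) (hr : 0 < r) :
    IntegrableOn (fun z : ℝ => |z| ^ p) (Ioc (-r) r) := by
  have hneg : IntervalIntegrable (fun z : ℝ => |z| ^ p) volume (-r) 0 := by
    rw [IntervalIntegrable.iff_comp_neg]
    simp only [abs_neg, neg_neg, neg_zero]
    exact (interval_integrable_abs_rpow hp hr).symm
  rw [intervalIntegrable_iff, uIoc_of_le (by linarith : -r ≤ 0)] at hneg
  rw [← Set.Ioc_union_Ioc_eq_Ioc (by linarith : -r ≤ 0) hr.le]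
  exact hneg.union (half_pos_integrable hp hr)

private lemma bulk_integral {p r : ℝ} (hp : -1 < p) (hr : 0 < r) :
    ∫ z in Ioc (-r) r, |z| ^ p = 2 * (r ^ (p + 1) / (p + 1)) := by
  have hneg : IntervalIntegrable (fun z : ℝ => |z| ^ p) volume (-r) 0 := by
    rw [IntervalIntegrable.iff_comp_neg]
    simp only [abs_neg, neg_neg, neg_zero]
    exact (interval_integrable_abs_rpow hp hr).symm
  rw [intervalIntegrable_iff, uIoc_of_le (by linarith : -r ≤ 0)] at hneg
  rw [← Set.Ioc_union_Ioc_eq_Ioc (by linarith : -r ≤ 0) hr.le,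
    setIntegral_union (Set.Ioc_disjoint_Ioc_of_le le_rfl) measurableSet_Ioc hneg
      (half_pos_integrable hp hr)]
  have h2 : ∫ z in Ioc (-r) 0, |z| ^ p = ∫ z in Ioc 0 r, |z| ^ p := by
    rw [← intervalIntegral.integral_of_le (by linarith : -r ≤ 0),
      ← intervalIntegral.integral_of_le hr.le]
    have := intervalIntegral.integral_comp_neg (a := (0:ℝ)) (b := r)
      (fun z : ℝ => |z| ^ p)
    simp only [abs_neg, neg_zero] at this
    rw [← this]
  rw [h2, half_pos_integral hp hr]; ring

private lemma tail_set_eq {r : ℝ} : {z : ℝ | r < |z|} = Iio (-r) ∪ Ioi r := by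
  ext z
  simp only [mem_setOf_eq, mem_union, mem_Iio, mem_Ioi, lt_abs]
  constructor
  · rintro (h | h); · right; exact h
    · left; linarith
  · rintro (h | h); · right; linarith
    · left; exact h

private lemma tail_integrable {p r : ℝ} (hp : p < -1) (hr : 0 < r) :
    IntegrableOn (fun z : ℝ => |z| ^ p) {z : ℝ | r < |z|} := by
  have hIoi : IntegrableOn (fun z : ℝ => |z| ^ p) (Ioi r) :=
    (integrableOn_Ioi_rpow_of_lt hp hr).congr_fun
      (fun z hz => by rw [abs_of_pos (hr.trans hz)]) measurableSet_Ioi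
  rw [tail_set_eq]
  exact (neg_half_integrable (fun x => by rw [abs_neg]) hIoi).union hIoi

private lemma tail_integral {p r : ℝ} (hp : p < -1) (hr : 0 < r) :
    ∫ z in {z : ℝ | r < |z|}, |z| ^ p = 2 * (r ^ (p + 1) / (-(p + 1))) := by
  have hIoi : IntegrableOn (fun z : ℝ => |z| ^ p) (Ioi r) :=
    (integrableOn_Ioi_rpow_of_lt hp hr).congr_fun
      (fun z hz => by rw [abs_of_pos (hr.trans hz)]) measurableSet_Ioi
  have hIio : IntegrableOn (fun z : ℝ => |z| ^ p) (Iio (-r)) :=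
    neg_half_integrable (fun x => by rw [abs_neg]) hIoi
  rw [tail_set_eq, setIntegral_union ((Set.Iio_disjoint_Ici (by linarith : -r ≤ r)).mono_right Set.Ioi_subset_Ici_self)
    measurableSet_Ioi hIio hIoi, neg_half_integral (fun x => by rw [abs_neg])]
  have h1 : ∫ z in Ioi r, |z| ^ p = ∫ z in Ioi r, z ^ p :=
    setIntegral_congr_fun measurableSet_Ioi (fun z hz => by rw [abs_of_pos (hr.trans hz)])
  rw [h1, integral_Ioi_rpow_of_lt hp hr]
  rw [div_neg]
  ring

private lemma rpow_subadd {a b p : ℝ} (ha : 0 ≤ a) (hb : 0 ≤ b) (hp : 0 ≤ p) (hp1 : p ≤ 1) :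
    (a + b) ^ p ≤ a ^ p + b ^ p := by
  have h := NNReal.rpow_add_le_add_rpow a.toNNReal b.toNNReal hp hp1
  have h2 := NNReal.coe_le_coe.mpr h
  push_cast at h2
  rwa [Real.coe_toNNReal _ ha, Real.coe_toNNReal _ hb] at h2

section main
variable {l l' M L : ℝ} {Φ : ℝ → ℝ}

private lemma keybd (hftc : ∀ a b : ℝ, Φ b - Φ a = ∫ s in a..b, deriv Φ s)
    (hL : ∀ᵐ x : ℝ, |deriv Φ x| ≤ L / (1 + |x| ^ (1 - l)))
    (x z K : ℝ) (hK0 : 0 ≤ K)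
    (hKb : ∀ t ∈ Icc (min x (x + z)) (max x (x + z)), L / (1 + |t| ^ (1 - l)) ≤ K) :
    |Φ (x + z) - Φ x| ≤ K * |z| := by
  have hmain : ∀ a b : ℝ, a ≤ b → (∀ t ∈ Icc a b, L / (1 + |t| ^ (1 - l)) ≤ K) →
      |Φ b - Φ a| ≤ K * (b - a) := by
    intro a b hab hKb'
    rw [hftc a b, ← Real.norm_eq_abs]
    have h := intervalIntegral.norm_integral_le_of_norm_le_const_ae (C := K)
      (f := deriv Φ) (a := a) (b := b) ?_
    · rwa [abs_of_nonneg (by linarith)] at h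
    · filter_upwards [hL] with t ht hmem
      rw [uIoc_of_le hab] at hmem
      refine le_trans (by simpa using ht) (hKb' t ⟨hmem.1.le, hmem.2⟩)
  rcases le_total 0 z with hz | hz
  · have h1 : min x (x + z) = x := min_eq_left (by linarith)
    have h2 : max x (x + z) = x + z := max_eq_right (by linarith)
    rw [h1, h2] at hKb
    have := hmain x (x + z) (by linarith) hKb
    simpa [abs_of_nonneg hz] using this
  · have h1 : min x (x + z) = x + z := min_eq_right (by linarith)
    have h2 : max x (x + z) = x := max_eq_left (by linarith)
    rw [h1, h2] at hKb
    have := hmain (x + z) x (by linarith) hKb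
    rw [abs_sub_comm]
    have he : x - (x + z) = -z := by ring
    rw [he] at this
    simpa [abs_of_nonpos hz] using this

end main

private lemma dom1 {l : ℝ} (hl0 : 0 < l) {Φ : ℝ → ℝ} {x z K : ℝ} (hK0 : 0 ≤ K)
    (h : |Φ (x + z) - Φ x| ≤ K * |z|) :
    |(Φ (x + z) - Φ x) / |z| ^ (1 + l)| ≤ K * |z| ^ (-l) := by
  rcases eq_or_ne z 0 with rfl | hz
  · simp [Real.zero_rpow (by positivity : (1:ℝ) + l ≠ 0),
      Real.zero_rpow (neg_ne_zero.2 hl0.ne')]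
  · have hza : 0 < |z| := abs_pos.2 hz
    rw [abs_div, abs_of_nonneg (Real.rpow_nonneg (abs_nonneg z) _),
      Real.rpow_add hza, Real.rpow_one, Real.rpow_neg (abs_nonneg z)]
    calc |Φ (x + z) - Φ x| / (|z| * |z| ^ l)
        ≤ (K * |z|) / (|z| * |z| ^ l) := by gcongr
      _ = K * (|z| ^ l)⁻¹ := by
          rw [mul_comm K |z|, mul_div_mul_left _ _ hza.ne', div_eq_mul_inv]

private lemma dom2 {l l' M c : ℝ} {Φ : ℝ → ℝ} {x z : ℝ} (hz : 0 < |z|)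
    (hnum : |Φ (x + z) - Φ x| ≤ c + M * |z| ^ l') :
    |(Φ (x + z) - Φ x) / |z| ^ (1 + l)| ≤ c * |z| ^ (-(1 + l)) + M * |z| ^ (l' - (1 + l)) := by
  have hBpos : 0 < |z| ^ (1 + l) := Real.rpow_pos_of_pos hz _
  rw [abs_div, abs_of_nonneg (Real.rpow_nonneg (abs_nonneg z) _)]
  calc |Φ (x + z) - Φ x| / |z| ^ (1 + l)
      ≤ (c + M * |z| ^ l') / |z| ^ (1 + l) := by gcongr
    _ = c * |z| ^ (-(1 + l)) + M * |z| ^ (l' - (1 + l)) := by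
        rw [add_div, div_eq_mul_inv, mul_div_assoc, ← Real.rpow_neg (abs_nonneg z),
          ← Real.rpow_sub hz]

private lemma psi_meas {l : ℝ} (hl0 : 0 < l) {Φ : ℝ → ℝ} (hcont : Continuous Φ) (x : ℝ) :
    AEStronglyMeasurable (fun z : ℝ => (Φ (x + z) - Φ x) / |z| ^ (1 + l)) volume := by
  apply Measurable.aestronglyMeasurable
  apply Measurable.div
  · exact ((hcont.comp (continuous_const.add continuous_id)).sub continuous_const).measurable
  · exact (continuous_abs.rpow_const fun z => Or.inr (by positivity)).measurable

private lemma estBound {l l' M : ℝ} (hl0 : 0 < l) (hl1 : l < 1) (hl'0 : 0 < l') (hl'l : l' < l)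
    (hM0 : 0 ≤ M) {Φ : ℝ → ℝ} (hcont : Continuous Φ)
    (hgrow : ∀ z : ℝ, |Φ z| ≤ M * (1 + |z| ^ l'))
    (x r K : ℝ) (hr : 1 ≤ r) (hK0 : 0 ≤ K)
    (hKb : ∀ z : ℝ, |z| ≤ r → |Φ (x + z) - Φ x| ≤ K * |z|) :
    Integrable (fun z : ℝ => (Φ (x + z) - Φ x) / |z| ^ (1 + l)) ∧
    (∫ z : ℝ, |(Φ (x + z) - Φ x) / |z| ^ (1 + l)|) ≤
      K * (2 * (r ^ (1 - l) / (1 - l))) +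
      ((M * (2 + 2 * |x| ^ l')) * (2 * (r ^ (-l) / l)) +
        M * (2 * (r ^ (l' - l) / (l - l')))) := by
  have rpos : (0:ℝ) < r := lt_of_lt_of_le one_pos hr
  set ψ : ℝ → ℝ := fun z => (Φ (x + z) - Φ x) / |z| ^ (1 + l) with hψdef
  set c := M * (2 + 2 * |x| ^ l') with hcdef
  have hc0 : 0 ≤ c := by positivity
  have hgrow2 : ∀ z : ℝ, |Φ (x + z) - Φ x| ≤ c + M * |z| ^ l' := by
    intro z
    have h1 := hgrow (x + z)
    have h2 := hgrow x
    have h3 : |x + z| ^ l' ≤ |x| ^ l' + |z| ^ l' := by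
      calc |x + z| ^ l' ≤ (|x| + |z|) ^ l' :=
            Real.rpow_le_rpow (abs_nonneg _) (abs_add_le x z) hl'0.le
        _ ≤ |x| ^ l' + |z| ^ l' := rpow_subadd (abs_nonneg x) (abs_nonneg z) hl'0.le (by linarith)
    have h4 : |Φ (x + z) - Φ x| ≤ |Φ (x + z)| + |Φ x| := abs_sub _ _
    nlinarith [Real.rpow_nonneg (abs_nonneg x) l', Real.rpow_nonneg (abs_nonneg z) l']
  have hS2m : MeasurableSet {z : ℝ | r < |z|} := measurableSet_lt measurable_const measurable_abs
  have hd1 : ∀ z ∈ Icc (-r) r, |ψ z| ≤ K * |z| ^ (-l) := fun z hz =>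
    dom1 hl0 hK0 (hKb z (abs_le.2 ⟨hz.1, hz.2⟩))
  have hd2 : ∀ z ∈ {z : ℝ | r < |z|}, |ψ z| ≤ c * |z| ^ (-(1 + l)) + M * |z| ^ (l' - (1 + l)) :=
    fun z hz => dom2 (lt_trans rpos hz) (hgrow2 z)
  have hb1 : IntegrableOn (fun z : ℝ => K * |z| ^ (-l)) (Icc (-r) r) volume := by
    rw [integrableOn_Icc_iff_integrableOn_Ioc]
    exact (bulk_integrable (by linarith) rpos).const_mul K
  have hb2a : IntegrableOn (fun z : ℝ => c * |z| ^ (-(1 + l))) {z : ℝ | r < |z|} volume :=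
    (tail_integrable (by linarith) rpos).const_mul c
  have hb2b : IntegrableOn (fun z : ℝ => M * |z| ^ (l' - (1 + l))) {z : ℝ | r < |z|} volume :=
    (tail_integrable (by linarith) rpos).const_mul M
  have hb2 : IntegrableOn
      (fun z : ℝ => c * |z| ^ (-(1 + l)) + M * |z| ^ (l' - (1 + l))) {z : ℝ | r < |z|} volume :=
    hb2a.add hb2b
  have hint1 : IntegrableOn ψ (Icc (-r) r) volume :=
    Integrable.mono' hb1 ((psi_meas hl0 hcont x).restrict)
      ((ae_restrict_iff' measurableSet_Icc).2 (.of_forall fun z hz => by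
        rw [Real.norm_eq_abs]; exact hd1 z hz))
  have hint2 : IntegrableOn ψ {z : ℝ | r < |z|} volume :=
    Integrable.mono' hb2 ((psi_meas hl0 hcont x).restrict)
      ((ae_restrict_iff' hS2m).2 (.of_forall fun z hz => by
        rw [Real.norm_eq_abs]; exact hd2 z hz))
  have hEq : (univ : Set ℝ) = Icc (-r) r ∪ {z : ℝ | r < |z|} := by
    ext z
    simp only [mem_univ, true_iff, mem_union, mem_Icc, mem_setOf_eq]
    rcases le_or_gt |z| r with h | h
    · exact Or.inl (abs_le.1 h)
    · exact Or.inr h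
  have hdisj : Disjoint (Icc (-r) r) {z : ℝ | r < |z|} := by
    rw [Set.disjoint_left]
    intro z hz hz2
    exact absurd hz2 (not_lt.2 (abs_le.2 ⟨hz.1, hz.2⟩))
  have hintall : Integrable ψ := by
    rw [← integrableOn_univ, hEq]; exact hint1.union hint2
  refine ⟨hintall, ?_⟩
  have hsplit : (∫ z : ℝ, |ψ z|) =
      (∫ z in Icc (-r) r, |ψ z|) + ∫ z in {z : ℝ | r < |z|}, |ψ z| := by
    rw [← setIntegral_univ, hEq, setIntegral_union hdisj hS2m hint1.abs hint2.abs]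
  have e1 : (∫ z in Icc (-r) r, |ψ z|) ≤ K * (2 * (r ^ (1 - l) / (1 - l))) := by
    calc (∫ z in Icc (-r) r, |ψ z|) ≤ ∫ z in Icc (-r) r, K * |z| ^ (-l) :=
          setIntegral_mono_on hint1.abs hb1 measurableSet_Icc hd1
      _ = K * ∫ z in Ioc (-r) r, |z| ^ (-l) := by
          rw [integral_Icc_eq_integral_Ioc, MeasureTheory.integral_const_mul]
      _ = K * (2 * (r ^ (1 - l) / (1 - l))) := by
          rw [bulk_integral (by linarith : (-1:ℝ) < -l) rpos]
          rw [(by ring : -l + 1 = 1 - l)]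
  have t1 : (∫ z in {z : ℝ | r < |z|}, |z| ^ (-(1 + l))) = 2 * (r ^ (-l) / l) := by
    rw [tail_integral (by linarith) rpos, (by ring : -(-(1 + l) + 1) = l),
      (by ring : -(1 + l) + 1 = -l)]
  have t2 : (∫ z in {z : ℝ | r < |z|}, |z| ^ (l' - (1 + l))) = 2 * (r ^ (l' - l) / (l - l')) := by
    rw [tail_integral (by linarith) rpos, (by ring : -(l' - (1 + l) + 1) = l - l'),
      (by ring : l' - (1 + l) + 1 = l' - l)]
  have e2 : (∫ z in {z : ℝ | r < |z|}, |ψ z|) ≤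
      c * (2 * (r ^ (-l) / l)) + M * (2 * (r ^ (l' - l) / (l - l'))) := by
    calc (∫ z in {z : ℝ | r < |z|}, |ψ z|)
        ≤ ∫ z in {z : ℝ | r < |z|}, (c * |z| ^ (-(1 + l)) + M * |z| ^ (l' - (1 + l))) :=
          setIntegral_mono_on hint2.abs hb2 hS2m hd2
      _ = c * (∫ z in {z : ℝ | r < |z|}, |z| ^ (-(1 + l))) +
          M * ∫ z in {z : ℝ | r < |z|}, |z| ^ (l' - (1 + l)) := by
          rw [integral_add hb2a hb2b, MeasureTheory.integral_const_mul, MeasureTheory.integral_const_mul]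
      _ = _ := by rw [t1, t2]
  rw [hsplit]
  exact add_le_add e1 e2

private lemma growth2 {l' M : ℝ} (hl'0 : 0 < l') (hl'1 : l' ≤ 1) (hM0 : 0 ≤ M)
    {Φ : ℝ → ℝ} (hgrow : ∀ z : ℝ, |Φ z| ≤ M * (1 + |z| ^ l')) (x z : ℝ) :
    |Φ (x + z) - Φ x| ≤ M * (2 + 2 * |x| ^ l') + M * |z| ^ l' := by
  have h1 := hgrow (x + z)
  have h2 := hgrow x
  have h3 : |x + z| ^ l' ≤ |x| ^ l' + |z| ^ l' := by
    calc |x + z| ^ l' ≤ (|x| + |z|) ^ l' :=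
          Real.rpow_le_rpow (abs_nonneg _) (abs_add_le x z) hl'0.le
      _ ≤ |x| ^ l' + |z| ^ l' := rpow_subadd (abs_nonneg x) (abs_nonneg z) hl'0.le hl'1
  have h4 : |Φ (x + z) - Φ x| ≤ |Φ (x + z)| + |Φ x| := abs_sub _ _
  nlinarith [Real.rpow_nonneg (abs_nonneg x) l', Real.rpow_nonneg (abs_nonneg z) l']

/-- well-posedness of the fractional Laplacian on sublinearly growing
functions.  Let `λ ∈ (0,1)` and let `Φ : ℝ → ℝ` be locally Lipschitz with
`|Φ x| ≤ M (1 + |x|^{λ'})` for some `0 < λ' < λ` and `|Φ' x| ≤ L/(1 + |x|^{1-λ})` for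
a.e. `x`.  Then for every `x` the integral `∫ |Φ(x+z) - Φ x|/|z|^{1+λ} dz` is finite,
so `L_λ[Φ]` is well-defined by the Lévy-Khintchine formula, and `L_λ[Φ]` is continuous
and bounded on `ℝ`. -/
theorem fractional_laplacian_sublinear_growth
    (l : ℝ) (hl : l ∈ Set.Ioo (0 : ℝ) 1)
    (G : ℝ) (hG : G = l * Real.Gamma ((1 + l) / 2) /
      (2 * Real.pi ^ ((1 : ℝ) / 2 + l) * Real.Gamma (1 - l / 2)))
    (Φ : ℝ → ℝ) (hlip : LocallyLipschitz Φ)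
    (l' : ℝ) (hl' : 0 < l') (hl'l : l' < l)
    (M : ℝ) (hM : ∀ x : ℝ, |Φ x| ≤ M * (1 + |x| ^ l'))
    (L : ℝ) (hL : ∀ᵐ x : ℝ, |deriv Φ x| ≤ L / (1 + |x| ^ (1 - l))) :
    (∀ x : ℝ, Integrable (fun z : ℝ => (Φ (x + z) - Φ x) / |z| ^ (1 + l))) ∧
    Continuous (fun x : ℝ => -G * ∫ z : ℝ, (Φ (x + z) - Φ x) / |z| ^ (1 + l)) ∧
    ∃ C : ℝ, ∀ x : ℝ, |(-G) * ∫ z : ℝ, (Φ (x + z) - Φ x) / |z| ^ (1 + l)| ≤ C := by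
  obtain ⟨hl0, hl1⟩ := hl
  have hcont : Continuous Φ := hlip.continuous
  have hL0 : 0 ≤ L := by
    obtain ⟨t, ht⟩ := hL.exists
    have h1 : (0:ℝ) < 1 + |t| ^ (1 - l) := by positivity
    have h2 : (0:ℝ) ≤ L / (1 + |t| ^ (1 - l)) := le_trans (abs_nonneg _) ht
    rcases div_nonneg_iff.mp h2 with ⟨h, _⟩ | ⟨_, h⟩
    · exact h
    · linarith
  have hM0 : 0 ≤ M := by
    have h := hM 0
    rw [abs_zero, Real.zero_rpow hl'.ne'] at h
    have := abs_nonneg (Φ 0)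
    nlinarith
  have haeL : ∀ᵐ t : ℝ, |deriv Φ t| ≤ L := by
    filter_upwards [hL] with t ht
    exact ht.trans (div_le_self hL0 (le_add_of_nonneg_right (Real.rpow_nonneg (abs_nonneg t) _)))
  have hderint : ∀ a b : ℝ, IntervalIntegrable (deriv Φ) volume a b := by
    intro a b
    rw [intervalIntegrable_iff]
    refine Integrable.mono' (g := fun _ => L) (integrableOn_const ?_)
      ((measurable_deriv Φ).aestronglyMeasurable.restrict) ?_
    · exact measure_Ioc_lt_top.ne
    · exact ae_restrict_of_ae (haeL.mono fun t ht => by rwa [Real.norm_eq_abs])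
  have hftc : ∀ a b : ℝ, Φ b - Φ a = ∫ s in a..b, deriv Φ s := loclip_ftc hlip hderint
  have bd1 : ∀ x z : ℝ, |Φ (x + z) - Φ x| ≤ L * |z| := by
    intro x z
    refine keybd hftc hL x z L hL0 fun t _ => ?_
    exact div_le_self hL0 (le_add_of_nonneg_right (Real.rpow_nonneg (abs_nonneg t) _))
  have bd2 : ∀ x z : ℝ, 2 ≤ |x| → |z| ≤ |x| / 2 →
      |Φ (x + z) - Φ x| ≤ (L / (1 + (|x| / 2) ^ (1 - l))) * |z| := by
    intro x z hx2 hzx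
    refine keybd hftc hL x z _ (by positivity) fun t ht => ?_
    obtain ⟨h2, h3⟩ := ht
    have hmin : x - |z| ≤ min x (x + z) :=
      le_min (by linarith [abs_nonneg z]) (by linarith [neg_abs_le z])
    have hmax : max x (x + z) ≤ x + |z| :=
      max_le (by linarith [abs_nonneg z]) (by linarith [le_abs_self z])
    have h1 : |t - x| ≤ |z| := by
      rw [abs_le]; constructor <;> linarith
    have h5 : |x| / 2 ≤ |t| := by
      have h6 := abs_sub_abs_le_abs_sub x t
      rw [abs_sub_comm x t] at h6
      linarith
    have hrp : (|x| / 2) ^ (1 - l) ≤ |t| ^ (1 - l) :=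
      Real.rpow_le_rpow (by positivity) h5 (by linarith)
    rcases hL0.eq_or_lt with rfl | hLpos
    · simp
    · exact (div_le_div_iff_of_pos_left hLpos (by positivity) (by positivity)).2 (by linarith)
  have goal1 : ∀ x : ℝ, Integrable (fun z : ℝ => (Φ (x + z) - Φ x) / |z| ^ (1 + l)) :=
    fun x => (estBound hl0 hl1 hl' hl'l hM0 hcont hM x 1 L le_rfl hL0 fun z _ => bd1 x z).1
  -- uniform bound on the absolute integral
  have hCbd : ∀ x : ℝ, (∫ z : ℝ, |(Φ (x + z) - Φ x) / |z| ^ (1 + l)|) ≤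
      L * (2 * (1 / (1 - l))) + ((M * (2 + 2 * 2 ^ l')) * (2 * (1 / l)) + 12 * M * (1 / l)
        + M * (2 * (1 / (l - l')))) := by
    intro x
    have hll' : (0:ℝ) < l - l' := by linarith
    rcases le_total |x| 2 with hx | hx
    · have h := (estBound hl0 hl1 hl' hl'l hM0 hcont hM x 1 L le_rfl hL0 fun z _ => bd1 x z).2
      refine h.trans ?_
      rw [Real.one_rpow, Real.one_rpow, Real.one_rpow]
      have hxl : |x| ^ l' ≤ 2 ^ l' := Real.rpow_le_rpow (abs_nonneg x) hx hl'.le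
      have hmid : (M * (2 + 2 * |x| ^ l')) * (2 * (1 / l)) ≤
          (M * (2 + 2 * 2 ^ l')) * (2 * (1 / l)) := by gcongr
      have hB3 : (0:ℝ) ≤ 12 * M * (1 / l) := by positivity
      linarith
    · set r := |x| / 2 with hrdef
      have hr1 : 1 ≤ r := by rw [hrdef]; linarith
      have hrpos : (0:ℝ) < r := by linarith
      have h := (estBound hl0 hl1 hl' hl'l hM0 hcont hM x r (L / (1 + r ^ (1 - l))) hr1
        (by positivity) fun z hz => bd2 x z hx hz).2
      refine h.trans ?_
      have hA0 : (0:ℝ) ≤ r ^ (1 - l) := Real.rpow_nonneg hrpos.le _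
      have hden : (0:ℝ) < 1 + r ^ (1 - l) := by positivity
      have hT1 : (L / (1 + r ^ (1 - l))) * (2 * (r ^ (1 - l) / (1 - l))) ≤
          L * (2 * (1 / (1 - l))) := by
        have e : (L / (1 + r ^ (1 - l))) * (2 * (r ^ (1 - l) / (1 - l))) =
            (L * r ^ (1 - l) / (1 + r ^ (1 - l))) * (2 * (1 / (1 - l))) := by ring
        rw [e]
        have h1l : (0:ℝ) < 1 - l := by linarith
        refine mul_le_mul_of_nonneg_right ?_ (by positivity)
        rw [div_le_iff₀ hden]
        nlinarith
      have hrl : r ^ (-l) ≤ 1 := Real.rpow_le_one_of_one_le_of_nonpos hr1 (by linarith)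
      have hrl0 : (0:ℝ) ≤ r ^ (-l) := Real.rpow_nonneg hrpos.le _
      have hrll : r ^ l' * r ^ (-l) ≤ 1 := by
        rw [← Real.rpow_add hrpos]
        exact Real.rpow_le_one_of_one_le_of_nonpos hr1 (by linarith)
      have hx_l' : |x| ^ l' ≤ 2 * r ^ l' := by
        have hxeq : |x| = 2 * r := by rw [hrdef]; ring
        rw [hxeq, Real.mul_rpow (by norm_num) hrpos.le]
        have h2l : (2:ℝ) ^ l' ≤ 2 := by
          calc (2:ℝ) ^ l' ≤ 2 ^ (1:ℝ) :=
                Real.rpow_le_rpow_of_exponent_le one_le_two (by linarith)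
            _ = 2 := Real.rpow_one 2
        nlinarith [Real.rpow_nonneg hrpos.le l']
      have hXR : |x| ^ l' * r ^ (-l) ≤ 2 := by
        have e1 : |x| ^ l' * r ^ (-l) ≤ 2 * r ^ l' * r ^ (-l) :=
          mul_le_mul_of_nonneg_right hx_l' hrl0
        nlinarith
      have hT2 : (M * (2 + 2 * |x| ^ l')) * (2 * (r ^ (-l) / l)) ≤ 12 * M * (1 / l) := by
        have e : (M * (2 + 2 * |x| ^ l')) * (2 * (r ^ (-l) / l)) =
            (4 * M * r ^ (-l) + 4 * M * (|x| ^ l' * r ^ (-l))) * (1 / l) := by ring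
        rw [e]
        have h12 : 4 * M * r ^ (-l) + 4 * M * (|x| ^ l' * r ^ (-l)) ≤ 12 * M := by
          nlinarith
        exact mul_le_mul_of_nonneg_right h12 (by positivity)
      have hT3 : M * (2 * (r ^ (l' - l) / (l - l'))) ≤ M * (2 * (1 / (l - l'))) := by
        gcongr
        exact Real.rpow_le_one_of_one_le_of_nonpos hr1 (by linarith)
      have hB2 : (0:ℝ) ≤ (M * (2 + 2 * 2 ^ l')) * (2 * (1 / l)) := by positivity
      linarith
  -- goal 3
  have goal3 : ∀ x : ℝ, |(-G) * ∫ z : ℝ, (Φ (x + z) - Φ x) / |z| ^ (1 + l)| ≤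
      |G| * (L * (2 * (1 / (1 - l))) + ((M * (2 + 2 * 2 ^ l')) * (2 * (1 / l)) + 12 * M * (1 / l)
        + M * (2 * (1 / (l - l'))))) := by
    intro x
    rw [abs_mul, abs_neg]
    refine mul_le_mul_of_nonneg_left (le_trans ?_ (hCbd x)) (abs_nonneg G)
    have h := MeasureTheory.norm_integral_le_integral_norm (μ := volume)
      (f := fun z : ℝ => (Φ (x + z) - Φ x) / |z| ^ (1 + l))
    simpa only [Real.norm_eq_abs] using h
  -- goal 2 : continuity
  have goal2 : Continuous fun x : ℝ => -G * ∫ z : ℝ, (Φ (x + z) - Φ x) / |z| ^ (1 + l) := by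
    refine continuous_const.mul ?_
    rw [continuous_iff_continuousAt]
    intro x₀
    set A := (|x₀| + 1) ^ l' with hAdef
    have hS2m : MeasurableSet {z : ℝ | 1 < |z|} := measurableSet_lt measurable_const measurable_abs
    apply continuousAt_of_dominated (bound := fun z =>
      (Icc (-1:ℝ) 1).indicator (fun z => L * |z| ^ (-l)) z +
      {z : ℝ | 1 < |z|}.indicator
        (fun z => (M * (2 + 2 * A)) * |z| ^ (-(1 + l)) + M * |z| ^ (l' - (1 + l))) z)
    · exact .of_forall fun x => psi_meas hl0 hcont x
    · filter_upwards [Metric.ball_mem_nhds x₀ one_pos] with x hx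
      refine .of_forall fun z => ?_
      have hxa : |x| ^ l' ≤ A := by
        rw [hAdef]
        apply Real.rpow_le_rpow (abs_nonneg x) ?_ hl'.le
        have h1 : dist x x₀ < 1 := Metric.mem_ball.1 hx
        rw [Real.dist_eq] at h1
        have h2 := abs_sub_abs_le_abs_sub x x₀
        linarith
      rw [Real.norm_eq_abs]
      rcases le_or_gt |z| 1 with hz | hz
      · rw [Set.indicator_of_mem (show z ∈ Icc (-1:ℝ) 1 from mem_Icc.2 (abs_le.1 hz)),
          Set.indicator_of_notMem
            (show z ∉ {z : ℝ | 1 < |z|} from fun h => absurd h (not_lt.2 hz)), add_zero]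
        exact dom1 hl0 hL0 (bd1 x z)
      · rw [Set.indicator_of_notMem
            (show z ∉ Icc (-1:ℝ) 1 from fun h => absurd (abs_le.2 (mem_Icc.1 h)) (not_le.2 hz)),
          Set.indicator_of_mem (show z ∈ {z : ℝ | 1 < |z|} from hz), zero_add]
        refine dom2 (by linarith) ?_
        refine (growth2 hl' (by linarith) hM0 hM x z).trans ?_
        have h3 : Real.rpow |z| l' ≥ 0 := Real.rpow_nonneg (abs_nonneg z) l'
        nlinarith [hxa]
    · apply Integrable.add
      · rw [integrable_indicator_iff measurableSet_Icc,
          integrableOn_Icc_iff_integrableOn_Ioc]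
        exact (bulk_integrable (by linarith) one_pos).const_mul L
      · rw [integrable_indicator_iff hS2m]
        exact ((tail_integrable (by linarith) one_pos).const_mul _).add
          ((tail_integrable (by linarith) one_pos).const_mul M)
    · refine .of_forall fun z => ?_
      exact (((hcont.comp (continuous_id.add continuous_const)).sub hcont).continuousAt).div_const _
  exact ⟨goal1, goal2, ⟨_, goal3⟩⟩
end

section
/- Let λ ∈ (0,1) and let u ∈ L¹(ℝ) ∩ BV(ℝ). Then for all r > 0, ∫_ℝ |ξ|^λ |F(u)(ξ)|² dξ ≤ (1/(2π²(1-λ) r^{1-λ})) |u|²_{BV(ℝ)} + (2 r^{1+λ}/(1+λ)) ‖u‖²_{L¹(ℝ)}. -/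
open MeasureTheory Set

open FourierTransform Real Filter

lemma norm_one_sub_exp (θ : ℝ) : ‖(1 : ℂ) - Complex.exp (θ * Complex.I)‖ = 2 * |Real.sin (θ/2)| := by
  rw [Complex.exp_mul_I]
  have h1 : (1 : ℂ) - (Complex.cos θ + Complex.sin θ * Complex.I)
      = Complex.ofReal (1 - Real.cos θ) + Complex.ofReal (- Real.sin θ) * Complex.I := by
    push_cast [← Complex.ofReal_cos, ← Complex.ofReal_sin]; ring
  rw [h1, Complex.norm_add_mul_I]
  have h2 : (1 - Real.cos θ) ^ 2 + (-Real.sin θ) ^ 2 = (2 * Real.sin (θ/2)) ^ 2 := by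
    have hc : Real.cos θ = 2 * Real.cos (θ/2) ^ 2 - 1 := by
      rw [← Real.cos_two_mul]; ring_nf
    have hs := Real.sin_sq_add_cos_sq (θ/2)
    have hs2 := Real.sin_sq_add_cos_sq θ
    nlinarith
  rw [h2, Real.sqrt_sq_eq_abs, abs_mul]
  norm_num


lemma trans_L1_bound (u : ℝ → ℝ) (hu1 : Integrable u) (huBV : eVariationOn u Set.univ ≠ ⊤)
    (h : ℝ) (hh : 0 < h) :
    ∫ x : ℝ, |u (x + h) - u x| ≤ h * (eVariationOn u Set.univ).toReal := by
  set V := (eVariationOn u Set.univ).toReal with hV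
  have hbv : BoundedVariationOn u Set.univ := huBV
  have hlbv := hbv.locallyBoundedVariationOn
  set w : ℝ → ℝ := variationOnFromTo u Set.univ 0 with hwdef
  have hw : Monotone w :=
    monotoneOn_univ.mp (variationOnFromTo.monotoneOn hlbv (mem_univ 0))
  have key0 : ∀ x y : ℝ, w y - w x = variationOnFromTo u Set.univ x y := by
    intro x y
    have := variationOnFromTo.add hlbv (mem_univ 0) (mem_univ x) (mem_univ y)
    simp only [hwdef]; linarith
  have key1 : ∀ x y : ℝ, x ≤ y → |u y - u x| ≤ w y - w x := by
    intro x y hxy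
    rw [key0, variationOnFromTo.eq_of_le u Set.univ hxy]
    have hb : BoundedVariationOn u (Set.univ ∩ Icc x y) := hlbv x y (mem_univ x) (mem_univ y)
    have := hb.dist_le (mem_inter (mem_univ x) (left_mem_Icc.2 hxy))
      (mem_inter (mem_univ y) (right_mem_Icc.2 hxy))
    rwa [Real.dist_eq, abs_sub_comm] at this
  have key2 : ∀ x y : ℝ, x ≤ y → w y - w x ≤ V := by
    intro x y hxy
    rw [key0, variationOnFromTo.eq_of_le u Set.univ hxy]
    exact ENNReal.toReal_mono huBV (eVariationOn.mono u inter_subset_left)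
  have ψint : Integrable (fun x : ℝ => |u (x + h) - u x|) :=
    ((hu1.comp_add_right h).sub hu1).abs
  have wint : ∀ a b : ℝ, IntervalIntegrable w volume a b := fun a b =>
    hw.intervalIntegrable
  have wint' : ∀ a b : ℝ, IntervalIntegrable (fun x => w (x + h)) volume a b := fun a b =>
    (hw.comp (fun x y hxy => by dsimp; linarith : Monotone (· + h))).intervalIntegrable
  have key3 : ∀ N : ℝ, 0 ≤ N → ∫ x in (-N)..N, |u (x + h) - u x| ≤ h * V := by
    intro N hN
    have hNN : -N ≤ N := by linarith
    have step1 : ∫ x in (-N)..N, |u (x + h) - u x| ≤ ∫ x in (-N)..N, (w (x + h) - w x) := by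
      apply intervalIntegral.integral_mono_on hNN ψint.intervalIntegrable
        ((wint' _ _).sub (wint _ _))
      exact fun x _ => key1 x (x + h) (by linarith)
    have step2 : ∫ x in (-N)..N, (w (x + h) - w x)
        = (∫ x in (-N + h)..(N + h), w x) - ∫ x in (-N)..N, w x := by
      rw [intervalIntegral.integral_sub (wint' _ _) (wint _ _),
        intervalIntegral.integral_comp_add_right]
    have c1 : (∫ x in (-N)..(-N + h), w x) + ∫ x in (-N + h)..(N + h), w x
        = ∫ x in (-N)..(N + h), w x :=
      intervalIntegral.integral_add_adjacent_intervals (wint _ _) (wint _ _)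
    have c2 : (∫ x in (-N)..N, w x) + ∫ x in N..(N + h), w x
        = ∫ x in (-N)..(N + h), w x :=
      intervalIntegral.integral_add_adjacent_intervals (wint _ _) (wint _ _)
    have b1 : ∫ x in N..(N + h), w x ≤ h * w (N + h) := by
      calc ∫ x in N..(N + h), w x ≤ ∫ _x in N..(N + h), w (N + h) :=
            intervalIntegral.integral_mono_on (by linarith) (wint _ _)
              intervalIntegrable_const (fun x hx => hw hx.2)
        _ = h * w (N + h) := by simp [intervalIntegral.integral_const]
    have b2 : h * w (-N) ≤ ∫ x in (-N)..(-N + h), w x := by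
      calc h * w (-N) = ∫ _x in (-N)..(-N + h), w (-N) := by
            simp [intervalIntegral.integral_const]
        _ ≤ ∫ x in (-N)..(-N + h), w x :=
            intervalIntegral.integral_mono_on (by linarith) intervalIntegrable_const
              (wint _ _) (fun x hx => hw hx.1)
    have b3 : w (N + h) - w (-N) ≤ V := key2 _ _ (by linarith)
    have b4 : h * w (N + h) - h * w (-N) ≤ h * V := by nlinarith
    linarith
  have lim : Filter.Tendsto (fun N : ℝ => ∫ x in (-N)..N, |u (x + h) - u x|)
      Filter.atTop (nhds (∫ x : ℝ, |u (x + h) - u x|)) :=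
    MeasureTheory.intervalIntegral_tendsto_integral ψint
      Filter.tendsto_neg_atTop_atBot Filter.tendsto_id
  exact le_of_tendsto lim ((Filter.eventually_ge_atTop 0).mono fun N hN => key3 N hN)

lemma fourier_pointwise_decay (u : ℝ → ℝ) (hu1 : Integrable u)
    (huBV : eVariationOn u Set.univ ≠ ⊤) (ξ : ℝ) :
    2 * Real.pi * |ξ| * ‖FourierTransform.fourier (fun x : ℝ => (u x : ℂ)) ξ‖
      ≤ (eVariationOn u Set.univ).toReal := by
  set V := (eVariationOn u Set.univ).toReal with hV
  set F := ‖FourierTransform.fourier (fun x : ℝ => (u x : ℂ)) ξ‖ with hF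
  have hF0 : 0 ≤ F := norm_nonneg _
  have hV0 : 0 ≤ V := ENNReal.toReal_nonneg
  rcases eq_or_ne ξ 0 with hξ | hξ
  · simp [hξ, hV0]
  have key : ∀ h : ℝ, 0 < h → 2 * |Real.sin (Real.pi * h * ξ)| * F ≤ h * V := by
    intro h hh
    have huc : Integrable (fun x : ℝ => (u x : ℂ)) := hu1.ofReal
    have huch : Integrable (fun x : ℝ => (u (x + h) : ℂ)) := huc.comp_add_right h
    have trans : FourierTransform.fourier (fun x : ℝ => (u (x + h) : ℂ)) ξ
        = Real.fourierChar (h * ξ) • FourierTransform.fourier (fun x : ℝ => (u x : ℂ)) ξ := by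
      have := congrFun (VectorFourier.fourierIntegral_comp_add_right (𝐞) (volume : Measure ℝ)
        (innerₗ ℝ) (fun x : ℝ => (u x : ℂ)) h) ξ
      simpa [FourierTransform.fourier, Function.comp_def, RCLike.inner_apply, conj_trivial, mul_comm h ξ] using this
    have diff : FourierTransform.fourier (fun x : ℝ => (u x : ℂ)) ξ
          - FourierTransform.fourier (fun x : ℝ => (u (x + h) : ℂ)) ξ
        = FourierTransform.fourier (fun x : ℝ => ((u x : ℂ) - (u (x + h) : ℂ))) ξ := by
      simp only [Real.fourier_eq, smul_sub]
      rw [integral_sub]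
      · exact (Real.fourierIntegral_convergent_iff ξ).2 huc
      · exact (Real.fourierIntegral_convergent_iff ξ).2 huch
    have bound : ‖FourierTransform.fourier (fun x : ℝ => ((u x : ℂ) - (u (x + h) : ℂ))) ξ‖
        ≤ ∫ x : ℝ, |u (x + h) - u x| := by
      refine (VectorFourier.norm_fourierIntegral_le_integral_norm 𝐞 volume (innerₗ ℝ) _ ξ).trans
        (le_of_eq ?_)
      congr 1 with x
      rw [← Complex.ofReal_sub, Complex.norm_real, Real.norm_eq_abs, abs_sub_comm]
    have lhs_eq : ‖FourierTransform.fourier (fun x : ℝ => (u x : ℂ)) ξ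
          - FourierTransform.fourier (fun x : ℝ => (u (x + h) : ℂ)) ξ‖
        = 2 * |Real.sin (Real.pi * h * ξ)| * F := by
      rw [trans, Circle.smul_def, Real.fourierChar_apply, smul_eq_mul]
      have : FourierTransform.fourier (fun x : ℝ => (u x : ℂ)) ξ
            - Complex.exp (↑(2 * Real.pi * (h * ξ)) * Complex.I)
              * FourierTransform.fourier (fun x : ℝ => (u x : ℂ)) ξ
          = ((1 : ℂ) - Complex.exp (↑(2 * Real.pi * (h * ξ)) * Complex.I))
              * FourierTransform.fourier (fun x : ℝ => (u x : ℂ)) ξ := by ring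
      rw [this, norm_mul, norm_one_sub_exp]
      ring_nf
      rw [hF]
    calc 2 * |Real.sin (Real.pi * h * ξ)| * F
        = ‖FourierTransform.fourier (fun x : ℝ => ((u x : ℂ) - (u (x + h) : ℂ))) ξ‖ := by
          rw [← diff, lhs_eq]
      _ ≤ ∫ x : ℝ, |u (x + h) - u x| := bound
      _ ≤ h * V := trans_L1_bound u hu1 huBV h hh
  -- limit h → 0⁺
  have hd : HasDerivAt (fun h : ℝ => Real.sin (Real.pi * h * ξ)) (Real.pi * ξ) 0 := by
    have base : HasDerivAt (fun h : ℝ => Real.pi * h * ξ) (Real.pi * ξ) 0 := by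
      simpa using ((hasDerivAt_id (0 : ℝ)).const_mul Real.pi).mul_const ξ
    have := (Real.hasDerivAt_sin (Real.pi * (0:ℝ) * ξ)).comp 0 base
    simp at this
    exact this
  have hslope : Tendsto (fun h : ℝ => Real.sin (Real.pi * h * ξ) / h) (nhdsWithin 0 (Ioi 0))
      (nhds (Real.pi * ξ)) := by
    have h1 := hasDerivAt_iff_tendsto_slope.mp hd
    have h2 : Tendsto (slope (fun h : ℝ => Real.sin (Real.pi * h * ξ)) 0)
        (nhdsWithin 0 (Ioi 0)) (nhds (Real.pi * ξ)) :=
      h1.mono_left (nhdsWithin_mono 0 (fun x hx => ne_of_gt hx))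
    refine h2.congr (fun h => ?_)
    simp [slope_def_field]
  have habs : Tendsto (fun h : ℝ => 2 * |Real.sin (Real.pi * h * ξ) / h| * F)
      (nhdsWithin 0 (Ioi 0)) (nhds (2 * (Real.pi * |ξ|) * F)) := by
    have : Tendsto (fun h : ℝ => |Real.sin (Real.pi * h * ξ) / h|) (nhdsWithin 0 (Ioi 0))
        (nhds (|Real.pi * ξ|)) := hslope.abs
    rw [abs_mul, abs_of_pos Real.pi_pos] at this
    exact ((this.const_mul 2).mul_const F)
  have hbdd : ∀ᶠ h in nhdsWithin (0:ℝ) (Ioi 0),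
      2 * |Real.sin (Real.pi * h * ξ) / h| * F ≤ V := by
    filter_upwards [self_mem_nhdsWithin] with h hh
    have hh' : (0:ℝ) < h := hh
    have hk := key h hh'
    have heq : 2 * (|Real.sin (Real.pi * h * ξ)| / h) * F
        = (2 * |Real.sin (Real.pi * h * ξ)| * F) / h := by ring
    rw [abs_div, abs_of_pos hh', heq, div_le_iff₀ hh']
    linarith [hk]
  have := le_of_tendsto habs hbdd
  calc 2 * Real.pi * |ξ| * F = 2 * (Real.pi * |ξ|) * F := by ring
    _ ≤ V := this

lemma integrableOn_comp_neg_aux {g : ℝ → ℝ} {r : ℝ}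
    (hg : IntegrableOn (fun x => g (-x)) (Ici r)) : IntegrableOn g (Iic (-r)) := by
  have h1 : Integrable ((Ici r).indicator (fun x => g (-x))) :=
    (integrable_indicator_iff measurableSet_Ici).2 hg
  have h2 := h1.comp_neg
  have h3 : (fun x => (Ici r).indicator (fun t => g (-t)) (-x)) = (Iic (-r)).indicator g := by
    funext x
    by_cases hx : x ≤ -r
    · rw [indicator_of_mem (by simp only [mem_Ici]; linarith : -x ∈ Ici r), indicator_of_mem (by simpa using hx)]
      simp
    · rw [indicator_of_notMem (by simp only [mem_Ici, not_le]; linarith [lt_of_not_ge hx]), indicator_of_notMem (by simpa using hx)]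
  rw [h3] at h2
  exact (integrable_indicator_iff measurableSet_Iic).1 h2


/-- frequency-splitting estimate for the `L¹ ∩ BV` part.  Let
`λ ∈ (0,1)` and `u ∈ L¹(ℝ) ∩ BV(ℝ)`.  Then for all `r > 0`,
`∫ |ξ|^λ ‖𝓕 u (ξ)‖² dξ ≤ (1/(2π²(1-λ) r^{1-λ})) |u|²_{BV} + (2 r^{1+λ}/(1+λ)) ‖u‖²_{L¹}`. -/
theorem frequency_splitting_L1BV_estimate
    (l : ℝ) (hl : l ∈ Set.Ioo (0 : ℝ) 1)
    (u : ℝ → ℝ)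
    (hu1 : Integrable u)
    (huBV : eVariationOn u Set.univ ≠ ⊤)
    (r : ℝ) (hr : 0 < r) :
    Integrable (fun ξ : ℝ =>
      |ξ| ^ l * ‖FourierTransform.fourier (fun x : ℝ => (u x : ℂ)) ξ‖ ^ 2) ∧
    (∫ ξ : ℝ, |ξ| ^ l * ‖FourierTransform.fourier (fun x : ℝ => (u x : ℂ)) ξ‖ ^ 2) ≤
      1 / (2 * Real.pi ^ 2 * (1 - l) * r ^ (1 - l)) *
          (eVariationOn u Set.univ).toReal ^ 2 +
        2 * r ^ (1 + l) / (1 + l) * (∫ x : ℝ, |u x|) ^ 2 := by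
  obtain ⟨hl0, hl1⟩ := hl
  set V := (eVariationOn u Set.univ).toReal with hVdef
  set M := ∫ x : ℝ, |u x| with hMdef
  set g : ℝ → ℝ :=
    fun ξ : ℝ => |ξ| ^ l * ‖FourierTransform.fourier (fun x : ℝ => (u x : ℂ)) ξ‖ ^ 2 with hgdef
  set C := V ^ 2 / (4 * Real.pi ^ 2) with hCdef
  have hπ := Real.pi_pos
  have hV0 : 0 ≤ V := ENNReal.toReal_nonneg
  have hM0 : 0 ≤ M := integral_nonneg fun x => abs_nonneg _
  have hC0 : 0 ≤ C := by positivity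
  have gnn : ∀ ξ, 0 ≤ g ξ := fun ξ => by
    simp only [hgdef]; positivity
  -- pointwise bounds
  have FM : ∀ ξ : ℝ, ‖FourierTransform.fourier (fun x : ℝ => (u x : ℂ)) ξ‖ ≤ M := by
    intro ξ
    refine (VectorFourier.norm_fourierIntegral_le_integral_norm 𝐞 volume (innerₗ ℝ) _ ξ).trans
      (le_of_eq ?_)
    simp [Complex.norm_real, hMdef]
  have Fdecay : ∀ ξ : ℝ, ξ ≠ 0 →
      ‖FourierTransform.fourier (fun x : ℝ => (u x : ℂ)) ξ‖ ≤ V / (2 * Real.pi * |ξ|) := by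
    intro ξ hξ
    have h1 := fourier_pointwise_decay u hu1 huBV ξ
    have h2 : 0 < 2 * Real.pi * |ξ| := by positivity
    rw [le_div_iff₀ h2]
    linarith [h1]
  have bound_Ioi : ∀ ξ ∈ Ioi r, g ξ ≤ C * ξ ^ (l - 2) := by
    intro ξ hξ
    have hξ0 : 0 < ξ := hr.trans hξ
    have habs : |ξ| = ξ := abs_of_pos hξ0
    have hF := Fdecay ξ (ne_of_gt hξ0)
    have hpow : ξ ^ (l - 2) = ξ ^ l / ξ ^ 2 := by
      rw [Real.rpow_sub hξ0, show ((2:ℝ)) = ((2:ℕ):ℝ) by norm_num, Real.rpow_natCast]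
    calc g ξ ≤ |ξ| ^ l * (V / (2 * Real.pi * |ξ|)) ^ 2 := by
          refine mul_le_mul_of_nonneg_left ?_ (Real.rpow_nonneg (abs_nonneg _) _)
          exact pow_le_pow_left₀ (norm_nonneg _) hF 2
      _ = C * ξ ^ (l - 2) := by
          rw [habs, hpow, hCdef]; field_simp; ring
  have bound_Iic : ∀ ξ ∈ Iic (-r), g ξ ≤ C * (-ξ) ^ (l - 2) := by
    intro ξ hξ
    have hξ0 : ξ < 0 := lt_of_le_of_lt hξ (by linarith)
    have hmξ : 0 < -ξ := by linarith
    have habs : |ξ| = -ξ := abs_of_neg hξ0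
    have hF := Fdecay ξ (ne_of_lt hξ0)
    have hpow : (-ξ) ^ (l - 2) = (-ξ) ^ l / (-ξ) ^ 2 := by
      rw [Real.rpow_sub hmξ, show ((2:ℝ)) = ((2:ℕ):ℝ) by norm_num, Real.rpow_natCast]
    calc g ξ ≤ |ξ| ^ l * (V / (2 * Real.pi * |ξ|)) ^ 2 := by
          refine mul_le_mul_of_nonneg_left ?_ (Real.rpow_nonneg (abs_nonneg _) _)
          exact pow_le_pow_left₀ (norm_nonneg _) hF 2
      _ = C * (-ξ) ^ (l - 2) := by
          rw [habs, hpow, hCdef]; field_simp; ring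
  have bound_Ioc : ∀ ξ : ℝ, g ξ ≤ |ξ| ^ l * M ^ 2 := by
    intro ξ
    exact mul_le_mul_of_nonneg_left (pow_le_pow_left₀ (norm_nonneg _) (FM ξ) 2)
      (Real.rpow_nonneg (abs_nonneg _) _)
  -- continuity
  have gcont : Continuous g := by
    apply Continuous.mul
    · exact continuous_abs.rpow_const (fun x => Or.inr hl0.le)
    · exact ((VectorFourier.fourierIntegral_continuous Real.continuous_fourierChar
        (by continuity) hu1.ofReal).norm.pow 2)
  have mcont : Continuous (fun ξ : ℝ => |ξ| ^ l * M ^ 2) :=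
    (continuous_abs.rpow_const (fun x => Or.inr hl0.le)).mul continuous_const
  -- integrability of majorants
  have hb2 : IntegrableOn (fun ξ : ℝ => C * ξ ^ (l - 2)) (Ioi r) :=
    (integrableOn_Ioi_rpow_of_lt (by linarith) hr).const_mul C
  have hb3 : IntegrableOn (fun ξ : ℝ => C * (-ξ) ^ (l - 2)) (Iic (-r)) := by
    apply integrableOn_comp_neg_aux
    simp only [neg_neg]
    rw [integrableOn_Ici_iff_integrableOn_Ioi]
    exact hb2
  -- integrability of g on pieces
  have iInt1 : IntegrableOn g (Ioc (-r) r) :=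
    (gcont.integrableOn_Icc).mono_set Ioc_subset_Icc_self
  have iInt2 : IntegrableOn g (Ioi r) := by
    apply Integrable.mono' hb2 gcont.aestronglyMeasurable.restrict
    refine (ae_restrict_iff' measurableSet_Ioi).2 (ae_of_all _ fun ξ hξ => ?_)
    rw [Real.norm_eq_abs, abs_of_nonneg (gnn ξ)]
    exact bound_Ioi ξ hξ
  have iInt3 : IntegrableOn g (Iic (-r)) := by
    apply Integrable.mono' hb3 gcont.aestronglyMeasurable.restrict
    refine (ae_restrict_iff' measurableSet_Iic).2 (ae_of_all _ fun ξ hξ => ?_)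
    rw [Real.norm_eq_abs, abs_of_nonneg (gnn ξ)]
    exact bound_Iic ξ hξ
  have hsplit : (univ : Set ℝ) = Iic (-r) ∪ (Ioc (-r) r ∪ Ioi r) := by
    rw [Ioc_union_Ioi_eq_Ioi (by linarith : -r ≤ r), Iic_union_Ioi]
  have gInt : Integrable g := by
    rw [← integrableOn_univ, hsplit]
    exact iInt3.union (iInt1.union iInt2)
  refine ⟨gInt, ?_⟩
  -- split the integral
  have hdisj1 : Disjoint (Ioc (-r) r) (Ioi r) := Ioc_disjoint_Ioi le_rfl
  have hdisj2 : Disjoint (Iic (-r)) (Ioc (-r) r ∪ Ioi r) := by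
    rw [Ioc_union_Ioi_eq_Ioi (by linarith : -r ≤ r)]
    exact Iic_disjoint_Ioi le_rfl
  have hsplit_int : (∫ ξ : ℝ, g ξ)
      = (∫ ξ in Iic (-r), g ξ) + ((∫ ξ in Ioc (-r) r, g ξ) + ∫ ξ in Ioi r, g ξ) := by
    rw [← setIntegral_univ, hsplit,
      setIntegral_union hdisj2 ((measurableSet_Ioc).union measurableSet_Ioi) iInt3
        (iInt1.union iInt2),
      setIntegral_union hdisj1 measurableSet_Ioi iInt1 iInt2]
  -- bound each piece
  have hval2 : ∫ ξ in Ioi r, C * ξ ^ (l - 2) = C * (r ^ (l - 1) / (1 - l)) := by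
    rw [integral_const_mul, integral_Ioi_rpow_of_lt (by linarith) hr,
      show l - 2 + 1 = l - 1 by ring]
    rw [neg_div, ← div_neg, show -(l-1) = 1 - l by ring]
  have B2 : ∫ ξ in Ioi r, g ξ ≤ C * (r ^ (l - 1) / (1 - l)) := by
    rw [← hval2]
    exact setIntegral_mono_on iInt2 hb2 measurableSet_Ioi bound_Ioi
  have hval3 : ∫ ξ in Iic (-r), C * (-ξ) ^ (l - 2) = C * (r ^ (l - 1) / (1 - l)) := by
    have := integral_comp_neg_Ioi r (fun ξ : ℝ => C * (-ξ) ^ (l - 2))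
    simp only [neg_neg] at this
    rw [← this, hval2]
  have B3 : ∫ ξ in Iic (-r), g ξ ≤ C * (r ^ (l - 1) / (1 - l)) := by
    rw [← hval3]
    exact setIntegral_mono_on iInt3 hb3 measurableSet_Iic bound_Iic
  -- middle piece
  have hii : IntervalIntegrable (fun x : ℝ => |x| ^ l) volume 0 r :=
    (continuous_abs.rpow_const (fun x => Or.inr hl0.le)).intervalIntegrable 0 r
  have hii2 : IntervalIntegrable (fun x : ℝ => |x| ^ l) volume (-r) 0 :=
    (continuous_abs.rpow_const (fun x => Or.inr hl0.le)).intervalIntegrable (-r) 0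
  have hJ0 : ∫ x in (0:ℝ)..r, |x| ^ l = r ^ (l + 1) / (l + 1) := by
    rw [intervalIntegral.integral_congr
      (g := fun x : ℝ => x ^ l) (by
        intro x hx
        rw [uIcc_of_le hr.le] at hx
        show |x| ^ l = x ^ l
        rw [abs_of_nonneg hx.1])]
    rw [integral_rpow (Or.inl (by linarith))]
    rw [Real.zero_rpow (by linarith)]
    ring
  have hJneg : ∫ x in (-r)..(0:ℝ), |x| ^ l = r ^ (l + 1) / (l + 1) := by
    have := intervalIntegral.integral_comp_neg (a := (0:ℝ)) (b := r) (fun x : ℝ => |x| ^ l)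
    simp only [abs_neg, neg_zero] at this
    rw [← this, hJ0]
  have hJ : ∫ ξ in Ioc (-r) r, |ξ| ^ l = 2 * r ^ (l + 1) / (l + 1) := by
    rw [← intervalIntegral.integral_of_le (by linarith : -r ≤ r),
      ← intervalIntegral.integral_add_adjacent_intervals hii2 hii, hJneg, hJ0]
    ring
  have hbmid : IntegrableOn (fun ξ : ℝ => |ξ| ^ l * M ^ 2) (Ioc (-r) r) :=
    (mcont.integrableOn_Icc).mono_set Ioc_subset_Icc_self
  have B1 : ∫ ξ in Ioc (-r) r, g ξ ≤ 2 * r ^ (l + 1) / (l + 1) * M ^ 2 := by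
    calc ∫ ξ in Ioc (-r) r, g ξ ≤ ∫ ξ in Ioc (-r) r, |ξ| ^ l * M ^ 2 :=
          setIntegral_mono_on iInt1 hbmid measurableSet_Ioc (fun ξ _ => bound_Ioc ξ)
      _ = (∫ ξ in Ioc (-r) r, |ξ| ^ l) * M ^ 2 := by rw [integral_mul_const]
      _ = 2 * r ^ (l + 1) / (l + 1) * M ^ 2 := by rw [hJ]
  -- final arithmetic
  have hrpow : r ^ (l - 1) = (r ^ (1 - l))⁻¹ := by
    rw [← Real.rpow_neg hr.le, show -(1 - l) = l - 1 by ring]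
  have hrpos : 0 < r ^ (1 - l) := Real.rpow_pos_of_pos hr _
  have final : C * (r ^ (l - 1) / (1 - l)) + (2 * r ^ (l + 1) / (l + 1) * M ^ 2
        + C * (r ^ (l - 1) / (1 - l)))
      = 1 / (2 * Real.pi ^ 2 * (1 - l) * r ^ (1 - l)) * V ^ 2
        + 2 * r ^ (1 + l) / (1 + l) * M ^ 2 := by
    rw [hCdef, hrpow, show (1:ℝ) + l = l + 1 by ring]
    have h1l : (0:ℝ) < 1 - l := by linarith
    have h1l' : (0:ℝ) < l + 1 := by linarith
    field_simp
    ring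
  rw [hsplit_int, ← final]
  linarith [B1, B2, B3]
end
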